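/- arXiv:2304.13248 — 6 statements merged into one kernel-verified Lean document; each statement's English description precedes it below -/
import Mathlib

section
/- Let P be an infinite lower triangular complex matrix with unit diagonal, H = P X P⁻¹ where X is the shift matrix, and let p_k(t) = ∑_j P_{k,j} t^j be the polynomials given by the rows of P. Then for every polynomial w of degree m and every n ∈ ℕ: p_n(t)·w(t) = ∑_{k=0}^{n+m} (w(H))_{n,k} · p_k(t). -/
open scoped BigOperators

/-- Product of infinite matrices; the sum is a `tsum`, which reduces to a finite
sum for the banded matrices considered here. -/
noncomputable def matMul (A B : ℕ → ℕ → ℂ) : ℕ → ℕ → ℂ :=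
  fun i k => ∑' j, A i j * B j k

noncomputable def matPow (A : ℕ → ℕ → ℂ) : ℕ → ℕ → ℕ → ℂ
  | 0 => fun i k => if i = k then 1 else 0
  | n + 1 => matMul (matPow A n) A

/-- Substitution of a matrix into a polynomial. -/
noncomputable def matPolyEval (w : Polynomial ℂ) (A : ℕ → ℕ → ℂ) : ℕ → ℕ → ℂ :=
  fun i k => ∑ m ∈ Finset.range (w.natDegree + 1), w.coeff m * matPow A m i k

/-- The shift matrix `X`, with `X_{j,j+1} = 1`. -/
def Xmat : ℕ → ℕ → ℂ := fun i k => if k = i + 1 then 1 else 0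

/-- The transpose `X̂` of the shift matrix. -/
def XhatMat : ℕ → ℕ → ℂ := fun i k => if i = k + 1 then 1 else 0

/-- The identity matrix. -/
def Imat : ℕ → ℕ → ℂ := fun i k => if i = k then 1 else 0

/-- The polynomial given by row `k` of a lower triangular matrix. -/
noncomputable def rowPoly (M : ℕ → ℕ → ℂ) (k : ℕ) : Polynomial ℂ :=
  ∑ j ∈ Finset.range (k + 1), Polynomial.C (M k j) * Polynomial.X ^ j

def IsBand (A : ℕ → ℕ → ℂ) (d : ℕ) : Prop := ∀ i k, i + d < k → A i k = 0

lemma IsBand.mono {A d e} (hA : IsBand A d) (h : d ≤ e) : IsBand A e :=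
  fun i k hk => hA i k (by omega)

lemma matMul_eq_sum {A d} (hA : IsBand A d) (B : ℕ → ℕ → ℂ) (i k : ℕ) :
    matMul A B i k = ∑ j ∈ Finset.range (i + d + 1), A i j * B j k := by
  apply tsum_eq_sum
  intro j hj
  rw [hA i j (by simpa using Nat.le_of_not_lt (Finset.mem_range.not.mp hj)), zero_mul]

lemma IsBand.matMul {A B a b} (hA : IsBand A a) (hB : IsBand B b) :
    IsBand (matMul A B) (a + b) := by
  intro i k hk
  rw [matMul_eq_sum hA]
  apply Finset.sum_eq_zero
  intro j hj
  rcases le_or_gt j (i + a) with h | h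
  · rw [hB j k (by omega), mul_zero]
  · rw [hA i j h, zero_mul]

lemma matMul_assoc {A B a b} (C : ℕ → ℕ → ℂ) (hA : IsBand A a) (hB : IsBand B b) :
    matMul (matMul A B) C = matMul A (matMul B C) := by
  funext i k
  rw [matMul_eq_sum (hA.matMul hB), matMul_eq_sum hA]
  have h1 : ∀ j ∈ Finset.range (i + (a + b) + 1),
      matMul A B i j * C j k = ∑ l ∈ Finset.range (i + a + 1), A i l * B l j * C j k := by
    intro j _
    rw [matMul_eq_sum hA, Finset.sum_mul]
  have h2 : ∀ l ∈ Finset.range (i + a + 1),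
      A i l * matMul B C l k = ∑ j ∈ Finset.range (i + (a + b) + 1), A i l * (B l j * C j k) := by
    intro l hl
    rw [matMul_eq_sum hB, Finset.mul_sum]
    apply Finset.sum_subset
    · intro x hx
      simp only [Finset.mem_range] at hx hl ⊢
      omega
    · intro x _ hx'
      rw [hB l x (by simp only [Finset.mem_range] at hx'; omega), zero_mul, mul_zero]
  rw [Finset.sum_congr rfl h1, Finset.sum_congr rfl h2, Finset.sum_comm]
  simp_rw [mul_assoc]

lemma matMul_Imat (A : ℕ → ℕ → ℂ) : matMul A Imat = A := by
  funext i k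
  unfold matMul Imat
  have : ∀ j : ℕ, A i j * (if j = k then 1 else 0) = if j = k then A i k else 0 := by
    intro j; split <;> simp_all
  rw [tsum_congr this, tsum_ite_eq]

lemma Imat_matMul (A : ℕ → ℕ → ℂ) : matMul Imat A = A := by
  funext i k
  unfold matMul Imat
  have : ∀ j : ℕ, (if i = j then 1 else 0) * A j k = if j = i then A i k else 0 := by
    intro j; split <;> simp_all <;> simp [eq_comm, *]
  rw [tsum_congr this, tsum_ite_eq]

lemma matMul_Xmat (A : ℕ → ℕ → ℂ) (i k : ℕ) :
    matMul A Xmat i k = if k = 0 then 0 else A i (k - 1) := by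
  unfold matMul Xmat
  rcases Nat.eq_zero_or_pos k with rfl | hk
  · simp
  · rw [if_neg (by omega)]
    have : ∀ j : ℕ, A i j * (if k = j + 1 then 1 else 0) =
        if j = k - 1 then A i (k - 1) else 0 := by
      intro j
      rcases eq_or_ne j (k - 1) with h | h
      · subst h; rw [if_pos rfl, if_pos (by omega), mul_one]
      · rw [if_neg h, if_neg (by omega), mul_zero]
    rw [tsum_congr this, tsum_ite_eq]

lemma matPow_Xmat (m : ℕ) : ∀ i k, matPow Xmat m i k = if k = i + m then 1 else 0 := by
  induction m with
  | zero => intro i k; simp [matPow, eq_comm]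
  | succ m ih =>
    intro i k
    rw [matPow, matMul_Xmat]
    rcases Nat.eq_zero_or_pos k with rfl | hk
    · rw [if_pos rfl, if_neg (by omega)]
    · rw [if_neg (by omega), ih]
      by_cases h : k = i + (m + 1)
      · rw [if_pos (by omega), if_pos h]
      · rw [if_neg (by omega), if_neg h]

lemma matMul_Xpow (A : ℕ → ℕ → ℂ) (m i k : ℕ) :
    matMul A (matPow Xmat m) i k = if m ≤ k then A i (k - m) else 0 := by
  unfold matMul
  rcases le_or_gt m k with h | h
  · rw [if_pos h]
    have : ∀ j : ℕ, A i j * matPow Xmat m j k = if j = k - m then A i (k - m) else 0 := by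
      intro j
      rw [matPow_Xmat]
      rcases eq_or_ne j (k - m) with hj | hj
      · subst hj; rw [if_pos rfl, if_pos (by omega), mul_one]
      · rw [if_neg (by omega), if_neg hj, mul_zero]
    rw [tsum_congr this, tsum_ite_eq]
  · rw [if_neg (by omega)]
    have : ∀ j : ℕ, A i j * matPow Xmat m j k = 0 := by
      intro j; rw [matPow_Xmat, if_neg (by omega), mul_zero]
    rw [tsum_congr this, tsum_zero]

lemma rowPoly_coeff (M : ℕ → ℕ → ℂ) (hM : ∀ k j : ℕ, j > k → M k j = 0) (k j : ℕ) :
    (rowPoly M k).coeff j = M k j := by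
  unfold rowPoly
  rw [Polynomial.finset_sum_coeff]
  simp only [Polynomial.coeff_C_mul, Polynomial.coeff_X_pow, mul_ite, mul_one, mul_zero]
  rcases le_or_gt j k with h | h
  · rw [Finset.sum_eq_single j (fun b _ hb => if_neg (fun hh => hb hh.symm))
      (by intro hj; simp at hj; omega), if_pos rfl]
  · rw [hM k j h]
    exact Finset.sum_eq_zero fun b hb => if_neg (by simp at hb; omega)

theorem stmt4 (P Pinv : ℕ → ℕ → ℂ)
    (hLT : ∀ k j : ℕ, j > k → P k j = 0) (hDiag : ∀ k, P k k = 1)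
    (hLTinv : ∀ k j : ℕ, j > k → Pinv k j = 0)
    (hInv1 : matMul P Pinv = Imat) (hInv2 : matMul Pinv P = Imat)
    (w : Polynomial ℂ) (n : ℕ) :
    rowPoly P n * w =
      ∑ k ∈ Finset.range (n + w.natDegree + 1),
        Polynomial.C (matPolyEval w (matMul (matMul P Xmat) Pinv) n k) * rowPoly P k := by
  set D := w.natDegree with hD
  set H : ℕ → ℕ → ℂ := matMul (matMul P Xmat) Pinv with hHdef
  have hP : IsBand P 0 := fun i k hk => hLT i k (by omega)
  have hPinv : IsBand Pinv 0 := fun i k hk => hLTinv i k (by omega)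
  have hX : IsBand Xmat 1 := fun i k hk => if_neg (by omega)
  have hPX : IsBand (matMul P Xmat) 1 := hP.matMul hX
  have hH : IsBand H 1 := hPX.matMul hPinv
  have hXpow : ∀ m, IsBand (matPow Xmat m) m := by
    intro m i k hk; rw [matPow_Xmat]; exact if_neg (by omega)
  have hHpow : ∀ m, IsBand (matPow H m) m := by
    intro m; induction m with
    | zero => intro i k hk; exact if_neg (by omega)
    | succ m ih => exact ih.matMul hH
  have hwH : IsBand (matPolyEval w H) D := by
    intro i k hk
    apply Finset.sum_eq_zero
    intro m hm
    rw [((hHpow m).mono (by simp at hm; omega)) i k hk, mul_zero]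
  have hHP : matMul H P = matMul P Xmat := by
    rw [hHdef, matMul_assoc P hPX hPinv, hInv2, matMul_Imat]
  have hHmP : ∀ m, matMul (matPow H m) P = matMul P (matPow Xmat m) := by
    intro m; induction m with
    | zero => show matMul Imat P = matMul P Imat; rw [Imat_matMul, matMul_Imat]
    | succ m ih =>
      show matMul (matMul (matPow H m) H) P = matMul P (matMul (matPow Xmat m) Xmat)
      rw [matMul_assoc P (hHpow m) hH, hHP, ← matMul_assoc Xmat (hHpow m) hP, ih,
        matMul_assoc Xmat hP (hXpow m)]
  have key : ∀ j, matMul (matPolyEval w H) P n j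
      = ∑ m ∈ Finset.range (D + 1), w.coeff m * (if m ≤ j then P n (j - m) else 0) := by
    intro j
    rw [matMul_eq_sum hwH]
    unfold matPolyEval
    simp_rw [Finset.sum_mul]
    rw [Finset.sum_comm]
    apply Finset.sum_congr rfl
    intro m hm
    simp_rw [mul_assoc]
    rw [← Finset.mul_sum]
    congr 1
    rw [← matMul_Xpow P m n j, ← hHmP m, matMul_eq_sum (hHpow m)]
    symm
    apply Finset.sum_subset
    · intro x hx; simp only [Finset.mem_range] at hx hm ⊢; omega
    · intro x _ hx
      rw [(hHpow m) n x (by simp only [Finset.mem_range] at hx; omega), zero_mul]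
  apply Polynomial.ext
  intro j
  have lhs : (rowPoly P n * w).coeff j
      = ∑ m ∈ Finset.range (j + 1), w.coeff m * P n (j - m) := by
    rw [mul_comm, Polynomial.coeff_mul, Finset.Nat.sum_antidiagonal_eq_sum_range_succ_mk]
    exact Finset.sum_congr rfl fun m _ => by rw [rowPoly_coeff P hLT]
  have rhs : (∑ k ∈ Finset.range (n + D + 1),
        Polynomial.C (matPolyEval w H n k) * rowPoly P k).coeff j
      = matMul (matPolyEval w H) P n j := by
    rw [Polynomial.finset_sum_coeff, matMul_eq_sum hwH]
    exact Finset.sum_congr rfl fun k _ => by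
      rw [Polynomial.coeff_C_mul, rowPoly_coeff P hLT]
  rw [lhs, rhs, key j]
  set N := j + D + 2 with hN
  have e1 : ∑ m ∈ Finset.range (j + 1), w.coeff m * P n (j - m)
      = ∑ m ∈ Finset.range N, w.coeff m * (if m ≤ j then P n (j - m) else 0) := by
    have hsub : ∑ m ∈ Finset.range (j + 1), w.coeff m * (if m ≤ j then P n (j - m) else 0)
        = ∑ m ∈ Finset.range N, w.coeff m * (if m ≤ j then P n (j - m) else 0) := by
      apply Finset.sum_subset
      · intro x hx; simp only [Finset.mem_range, hN] at *; omega
      · intro x _ hx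
        rw [if_neg (by simp only [Finset.mem_range] at hx; omega), mul_zero]
    rw [← hsub]
    exact Finset.sum_congr rfl fun m hm => by
      rw [if_pos (by simp only [Finset.mem_range] at hm; omega)]
  have e2 : ∑ m ∈ Finset.range (D + 1), w.coeff m * (if m ≤ j then P n (j - m) else 0)
      = ∑ m ∈ Finset.range N, w.coeff m * (if m ≤ j then P n (j - m) else 0) := by
    apply Finset.sum_subset
    · intro x hx; simp only [Finset.mem_range] at *; omega
    · intro x _ hx
      rw [Polynomial.coeff_eq_zero_of_natDegree_lt
        (by simp only [Finset.mem_range] at hx; omega), zero_mul]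
  rw [e1, e2]
end

section
/- With H = P X P⁻¹ as above (H_{n,n+1} = 1, entries h_{n,j} = H_{n,j} for j ≤ n) and linearization coefficients d(n,m,k) defined by p_n p_m = ∑_k d(n,m,k) p_k, the following recurrence holds for all n, m, k ∈ ℕ: d(n+1,m,k) = d(n,m+1,k) + (h_{m,m} − h_{n,n}) d(n,m,k) + ∑_{j=0}^{m−1} h_{m,j} d(n,j,k) − ∑_{j=0}^{n−1} h_{n,j} d(m,j,k). -/
open scoped BigOperators

section Aux
set_option linter.unusedSectionVars false
variable (P Pinv : ℕ → ℕ → ℂ)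
  (hLT : ∀ k j : ℕ, j > k → P k j = 0) (hDiag : ∀ k, P k k = 1)
  (hLTinv : ∀ k j : ℕ, j > k → Pinv k j = 0)
  (hInv2 : matMul Pinv P = Imat)

include hLT in
lemma coeff_rowPoly (k j : ℕ) : (rowPoly P k).coeff j = P k j := by
  unfold rowPoly
  rw [Polynomial.finset_sum_coeff]
  simp only [Polynomial.coeff_C_mul, Polynomial.coeff_X_pow]
  rw [Finset.sum_eq_single j]
  · by_cases h : j ∈ Finset.range (k+1)
    · simp
    · simp at h
      rw [hLT k j (by omega)]
      simp
  · intro b _ hb; simp [Ne.symm hb]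
  · intro h
    simp at h
    rw [hLT k j (by omega)]
    simp

include hLT hDiag in
lemma unique_coeffs : ∀ (N : ℕ) (c : ℕ → ℂ),
    (∑ k ∈ Finset.range N, Polynomial.C (c k) * rowPoly P k) = 0 →
    ∀ k < N, c k = 0 := by
  intro N
  induction N with
  | zero => intro c _ k hk; omega
  | succ N ih =>
    intro c hc k hk
    have hcN : c N = 0 := by
      have h2 := congrArg (fun p => Polynomial.coeff p N) hc
      simp only [Polynomial.finset_sum_coeff, Polynomial.coeff_C_mul,
        coeff_rowPoly P hLT, Polynomial.coeff_zero] at h2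
      rwa [Finset.sum_range_succ, Finset.sum_eq_zero, zero_add, hDiag, mul_one] at h2
      intro i hi
      rw [hLT i N (Finset.mem_range.mp hi), mul_zero]
    rcases Nat.lt_succ_iff_lt_or_eq.mp hk with h | h
    · refine ih c ?_ k h
      rw [Finset.sum_range_succ, hcN] at hc; simpa using hc
    · rw [h]; exact hcN

include hLT in
lemma PX_eq (n i : ℕ) : matMul P Xmat n i = if i = 0 then 0 else P n (i-1) := by
  unfold matMul Xmat
  cases i with
  | zero => simp
  | succ i =>
    rw [tsum_eq_single i]
    · simp
    · intro b hb
      simp [(by omega : ¬ (i + 1 = b + 1)), hb]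
      intro h; omega

include hLT hDiag hLTinv hInv2 in
lemma Pinv_diag (k : ℕ) : Pinv k k = 1 := by
  have h := congrFun (congrFun hInv2 k) k
  unfold matMul Imat at h
  rw [tsum_eq_single k] at h
  · rw [hDiag, mul_one] at h; simpa using h
  · intro b hb
    rcases lt_or_gt_of_ne hb with h' | h'
    · rw [hLT b k h', mul_zero]
    · rw [hLTinv k b h', zero_mul]

include hLT in
lemma Hfin (n l : ℕ) : matMul (matMul P Xmat) Pinv n l =
    ∑ i ∈ Finset.range (n+2), matMul P Xmat n i * Pinv i l := by
  have h0 : matMul (matMul P Xmat) Pinv n l = ∑' i, matMul P Xmat n i * Pinv i l := rfl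
  rw [h0]
  apply tsum_eq_sum
  intro b hb
  simp only [Finset.mem_range] at hb
  rw [PX_eq P hLT, if_neg (by omega), hLT n (b-1) (by omega), zero_mul]

include hLT hDiag hLTinv hInv2 in
lemma Htop (n : ℕ) : matMul (matMul P Xmat) Pinv n (n+1) = 1 := by
  rw [Hfin P Pinv hLT]
  rw [Finset.sum_eq_single (n+1)]
  · rw [PX_eq P hLT, if_neg (by omega), Pinv_diag P Pinv hLT hDiag hLTinv hInv2]
    simp [hDiag]
  · intro b hb hbne
    simp only [Finset.mem_range] at hb
    rw [hLTinv b (n+1) (by omega), mul_zero]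
  · intro h; simp at h

include hLTinv hInv2 in
lemma PinvP_fin (i j N : ℕ) (hi : i < N) :
    ∑ l ∈ Finset.range N, Pinv i l * P l j = Imat i j := by
  rw [← congrFun (congrFun hInv2 i) j]
  unfold matMul
  symm
  apply tsum_eq_sum
  intro b hb
  simp only [Finset.mem_range] at hb
  rw [hLTinv i b (by omega), zero_mul]

include hLT hLTinv hInv2 in
lemma HP_eq_PX (n j : ℕ) :
    ∑ l ∈ Finset.range (n+2), matMul (matMul P Xmat) Pinv n l * P l j
      = matMul P Xmat n j := by
  have h1 : ∀ l, matMul (matMul P Xmat) Pinv n l * P l j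
      = ∑ i ∈ Finset.range (n+2), matMul P Xmat n i * Pinv i l * P l j := by
    intro l
    rw [Hfin P Pinv hLT, Finset.sum_mul]
  simp_rw [h1]
  rw [Finset.sum_comm]
  have h2 : ∀ i ∈ Finset.range (n+2),
      ∑ l ∈ Finset.range (n+2), matMul P Xmat n i * Pinv i l * P l j
        = matMul P Xmat n i * Imat i j := by
    intro i hi
    simp only [Finset.mem_range] at hi
    rw [← PinvP_fin P Pinv hLTinv hInv2 i j (n+2) hi, Finset.mul_sum]
    simp [mul_assoc]
  rw [Finset.sum_congr rfl h2]
  by_cases hj : j < n + 2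
  · rw [Finset.sum_eq_single j]
    · simp [Imat]
    · intro b _ hbne; simp [Imat, hbne]
    · intro h; simp at h; omega
  · rw [Finset.sum_eq_zero, PX_eq P hLT, if_neg (by omega), hLT n (j-1) (by omega)]
    intro i hi
    simp only [Finset.mem_range] at hi
    have : Imat i j = 0 := by simp [Imat]; omega
    rw [this, mul_zero]

include hLT hLTinv hInv2 in
lemma key (n : ℕ) :
    Polynomial.X * rowPoly P n =
      ∑ l ∈ Finset.range (n+2),
        Polynomial.C (matMul (matMul P Xmat) Pinv n l) * rowPoly P l := by
  ext j
  rw [Polynomial.finset_sum_coeff]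
  simp only [Polynomial.coeff_C_mul, coeff_rowPoly P hLT]
  rw [HP_eq_PX P Pinv hLT hLTinv hInv2 n j, PX_eq P hLT]
  cases j with
  | zero => simp
  | succ j =>
    rw [Polynomial.coeff_X_mul, coeff_rowPoly P hLT]
    simp

include hLT hDiag in
lemma dsym (d : ℕ → ℕ → ℕ → ℂ)
    (hd : ∀ n m : ℕ, rowPoly P n * rowPoly P m =
        ∑ k ∈ Finset.range (n + m + 1), Polynomial.C (d n m k) * rowPoly P k)
    (hd0 : ∀ n m k : ℕ, n + m < k → d n m k = 0)
    (a b kk : ℕ) : d a b kk = d b a kk := by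
  by_cases h : a + b < kk
  · rw [hd0 a b kk h, hd0 b a kk (by omega)]
  · have h1 : ∑ k ∈ Finset.range (a + b + 1),
        Polynomial.C (d a b k - d b a k) * rowPoly P k = 0 := by
      simp only [map_sub, sub_mul, Finset.sum_sub_distrib]
      rw [← hd a b]
      rw [show (∑ k ∈ Finset.range (a+b+1), Polynomial.C (d b a k) * rowPoly P k)
          = ∑ k ∈ Finset.range (b+a+1), Polynomial.C (d b a k) * rowPoly P k by
            rw [Nat.add_comm a b],
        ← hd b a, mul_comm, sub_self]
    have h2 := unique_coeffs P hLT hDiag (a+b+1) _ h1 kk (by omega)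
    exact sub_eq_zero.mp h2

end Aux

theorem stmt6 (P Pinv : ℕ → ℕ → ℂ)
    (hLT : ∀ k j : ℕ, j > k → P k j = 0) (hDiag : ∀ k, P k k = 1)
    (hLTinv : ∀ k j : ℕ, j > k → Pinv k j = 0)
    (hInv1 : matMul P Pinv = Imat) (hInv2 : matMul Pinv P = Imat)
    (d : ℕ → ℕ → ℕ → ℂ)
    (hd : ∀ n m : ℕ, rowPoly P n * rowPoly P m =
        ∑ k ∈ Finset.range (n + m + 1), Polynomial.C (d n m k) * rowPoly P k)
    (hd0 : ∀ n m k : ℕ, n + m < k → d n m k = 0)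
    (n m k : ℕ) :
    let H := matMul (matMul P Xmat) Pinv
    d (n + 1) m k = d n (m + 1) k + (H m m - H n n) * d n m k
      + ∑ j ∈ Finset.range m, H m j * d n j k
      - ∑ j ∈ Finset.range n, H n j * d m j k := by
  intro H
  have hH : H = matMul (matMul P Xmat) Pinv := rfl
  set K := n + m + 2 with hK
  by_cases hk : K ≤ k
  · rw [hd0 (n+1) m k (by omega), hd0 n (m+1) k (by omega), hd0 n m k (by omega)]
    rw [Finset.sum_eq_zero (fun j hj => by
      simp only [Finset.mem_range] at hj
      rw [hd0 n j k (by omega), mul_zero])]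
    rw [Finset.sum_eq_zero (fun j hj => by
      simp only [Finset.mem_range] at hj
      rw [hd0 m j k (by omega), mul_zero])]
    ring
  · push_neg at hk
    have hdK : ∀ a b : ℕ, a + b < K →
        rowPoly P a * rowPoly P b =
          ∑ kk ∈ Finset.range K, Polynomial.C (d a b kk) * rowPoly P kk := by
      intro a b hab
      rw [hd a b]
      apply Finset.sum_subset
      · intro x hx; simp only [Finset.mem_range] at hx ⊢; omega
      · intro x hx hx2
        simp only [Finset.mem_range] at hx hx2
        rw [hd0 a b x (by omega)]; simp
    have e1 : Polynomial.X * (rowPoly P n * rowPoly P m)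
        = ∑ kk ∈ Finset.range K,
            Polynomial.C (∑ l ∈ Finset.range (n+2), H n l * d l m kk) * rowPoly P kk :=
      calc Polynomial.X * (rowPoly P n * rowPoly P m)
          = ∑ l ∈ Finset.range (n+2), Polynomial.C (H n l) * (rowPoly P l * rowPoly P m) := by
            rw [← mul_assoc, hH, key P Pinv hLT hLTinv hInv2 n, Finset.sum_mul]
            simp [mul_assoc]
        _ = ∑ l ∈ Finset.range (n+2), ∑ kk ∈ Finset.range K,
              Polynomial.C (H n l * d l m kk) * rowPoly P kk := by
            refine Finset.sum_congr rfl fun l hl => ?_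
            simp only [Finset.mem_range] at hl
            rw [hdK l m (by omega), Finset.mul_sum]
            simp [map_mul, mul_assoc]
        _ = ∑ kk ∈ Finset.range K,
              Polynomial.C (∑ l ∈ Finset.range (n+2), H n l * d l m kk) * rowPoly P kk := by
            rw [Finset.sum_comm]
            exact Finset.sum_congr rfl fun kk _ => by rw [map_sum, Finset.sum_mul]
    have e2 : Polynomial.X * (rowPoly P n * rowPoly P m)
        = ∑ kk ∈ Finset.range K,
            Polynomial.C (∑ l ∈ Finset.range (m+2), H m l * d n l kk) * rowPoly P kk :=
      calc Polynomial.X * (rowPoly P n * rowPoly P m)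
          = ∑ l ∈ Finset.range (m+2), Polynomial.C (H m l) * (rowPoly P n * rowPoly P l) := by
            rw [mul_comm (rowPoly P n), ← mul_assoc, hH, key P Pinv hLT hLTinv hInv2 m,
              Finset.sum_mul]
            simp [mul_assoc, mul_comm (rowPoly P n)]
        _ = ∑ l ∈ Finset.range (m+2), ∑ kk ∈ Finset.range K,
              Polynomial.C (H m l * d n l kk) * rowPoly P kk := by
            refine Finset.sum_congr rfl fun l hl => ?_
            simp only [Finset.mem_range] at hl
            rw [hdK n l (by omega), Finset.mul_sum]
            simp [map_mul, mul_assoc]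
        _ = ∑ kk ∈ Finset.range K,
              Polynomial.C (∑ l ∈ Finset.range (m+2), H m l * d n l kk) * rowPoly P kk := by
            rw [Finset.sum_comm]
            exact Finset.sum_congr rfl fun kk _ => by rw [map_sum, Finset.sum_mul]
    have hzero : ∑ kk ∈ Finset.range K,
        Polynomial.C ((∑ l ∈ Finset.range (n+2), H n l * d l m kk)
          - ∑ l ∈ Finset.range (m+2), H m l * d n l kk) * rowPoly P kk = 0 := by
      simp only [map_sub, sub_mul, Finset.sum_sub_distrib]
      rw [← e1, ← e2, sub_self]
    have E := sub_eq_zero.mp (unique_coeffs P hLT hDiag K _ hzero k hk)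
    simp only [Finset.sum_range_succ] at E
    rw [hH, Htop P Pinv hLT hDiag hLTinv hInv2 n, Htop P Pinv hLT hDiag hLTinv hInv2 m,
      ← hH, one_mul] at E
    -- E : ∑_{j<n} H n j * d j m k + H n n * d n m k + d (n+1) m k
    --   = ∑_{j<m} H m j * d n j k + H m m * d n m k + d n (m+1) k
    have hs : ∑ j ∈ Finset.range n, H n j * d j m k
        = ∑ j ∈ Finset.range n, H n j * d m j k := by
      exact Finset.sum_congr rfl (fun j _ => by
        rw [dsym P hLT hDiag d hd hd0 j m k])
    rw [hs] at E
    linear_combination E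
end

section
/- Let {p_n} be the monic polynomial sequence satisfying the three-term recurrence p_{n+1}(t) = (t − β_n)p_n(t) − α_n p_{n−1}(t) with α_n ≠ 0 for n ≥ 1, and let d(n,m,k) be the coefficients in p_n p_m = ∑_k d(n,m,k) p_k. Then d(n,m,0) = δ_{n,m} · α_1 α_2 ⋯ α_n for all n, m ∈ ℕ. -/
open scoped BigOperators

open Polynomial

noncomputable def cseq (p : ℕ → Polynomial ℂ) : ℕ → ℂ
  | 0 => 1
  | (k+1) => -∑ j ∈ (Finset.range (k+1)).attach, (p (k+1)).coeff j.1 * cseq p j.1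
decreasing_by exact Finset.mem_range.mp j.2

noncomputable def Lfun (p : ℕ → Polynomial ℂ) (q : Polynomial ℂ) : ℂ :=
  q.sum (fun j a => a * cseq p j)

lemma Lfun_add (p : ℕ → Polynomial ℂ) (q r : Polynomial ℂ) :
    Lfun p (q + r) = Lfun p q + Lfun p r := by
  unfold Lfun
  apply Polynomial.sum_add_index <;> intros <;> ring

lemma Lfun_C_mul (p : ℕ → Polynomial ℂ) (a : ℂ) (q : Polynomial ℂ) :
    Lfun p (Polynomial.C a * q) = a * Lfun p q := by
  unfold Lfun
  rw [Polynomial.C_mul', Polynomial.sum_smul_index q a (fun j b => b * cseq p j) (fun i => zero_mul _),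
    Polynomial.sum, Polynomial.sum, Finset.mul_sum]
  congr 1; ext j; ring

lemma Lfun_sum (p : ℕ → Polynomial ℂ) {ι : Type*} (s : Finset ι) (f : ι → Polynomial ℂ) :
    Lfun p (∑ i ∈ s, f i) = ∑ i ∈ s, Lfun p (f i) := by
  induction s using Finset.cons_induction with
  | empty => simp [Lfun]
  | cons a s ha ih => rw [Finset.sum_cons, Lfun_add, ih, Finset.sum_cons]

lemma pmonic (β : ℕ → ℂ) (α : ℕ → ℂ) (p : ℕ → Polynomial ℂ) (hp0 : p 0 = 1)
    (hp1 : p 1 = X - C (β 0))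
    (hrec : ∀ n, 1 ≤ n → p (n+1) = (X - C (β n)) * p n - C (α n) * p (n-1)) :
    ∀ n, (p n).Monic ∧ (p n).natDegree = n := by
  intro n
  induction n using Nat.strong_induction_on with
  | _ n ih =>
    match n with
    | 0 => rw [hp0]; exact ⟨monic_one, natDegree_one⟩
    | 1 => rw [hp1]; exact ⟨monic_X_sub_C _, natDegree_X_sub_C _⟩
    | (k+2) =>
      have h1 := ih (k+1) (by omega)
      have h0 := ih k (by omega)
      have hrw := hrec (k+1) (by omega)
      simp only [Nat.add_sub_cancel] at hrw
      rw [hrw]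
      have hm : ((X - C (β (k+1))) * p (k+1)).Monic := (monic_X_sub_C _).mul h1.1
      have hdeg : ((X - C (β (k+1))) * p (k+1)).natDegree = k+2 := by
        rw [Polynomial.natDegree_mul (X_sub_C_ne_zero _) h1.1.ne_zero,
          natDegree_X_sub_C, h1.2]
        omega
      have hnlt : (C (α (k+1)) * p k).natDegree < ((X - C (β (k+1))) * p (k+1)).natDegree := by
        have h2 := natDegree_C_mul_le (α (k+1)) (p k)
        rw [hdeg]
        rw [h0.2] at h2; omega
      have hlt := degree_lt_degree hnlt
      refine ⟨hm.sub_of_left hlt, ?_⟩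
      rw [natDegree_sub_eq_left_of_natDegree_lt hnlt, hdeg]

lemma Lfun_p (β : ℕ → ℂ) (α : ℕ → ℂ) (p : ℕ → Polynomial ℂ) (hp0 : p 0 = 1)
    (hp1 : p 1 = X - C (β 0))
    (hrec : ∀ n, 1 ≤ n → p (n+1) = (X - C (β n)) * p n - C (α n) * p (n-1)) :
    ∀ k, Lfun p (p k) = if k = 0 then 1 else 0 := by
  intro k
  have hmon := pmonic β α p hp0 hp1 hrec
  have hsum : Lfun p (p k) =
      ∑ n ∈ Finset.range (k + 1), (p k).coeff n * cseq p n := by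
    unfold Lfun
    rw [Polynomial.sum_over_range (p k) (fun n => zero_mul (cseq p n)), (hmon k).2]
  match k with
  | 0 => rw [hsum]; simp [hp0, cseq]
  | (j+1) =>
    rw [hsum, Finset.sum_range_succ]
    have hc : (p (j+1)).coeff (j+1) = 1 := by
      have := (hmon (j+1)).1.coeff_natDegree
      rwa [(hmon (j+1)).2] at this
    rw [hc, one_mul]
    have : cseq p (j+1) = -∑ n ∈ Finset.range (j+1), (p (j+1)).coeff n * cseq p n := by
      rw [cseq]
      congr 1
      exact Finset.sum_attach _ (fun n => (p (j+1)).coeff n * cseq p n)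
    rw [this]
    simp

theorem stmt8 (β : ℕ → ℂ) (α : ℕ → ℂ) (p : ℕ → Polynomial ℂ)
    (hp0 : p 0 = 1) (hp1 : p 1 = Polynomial.X - Polynomial.C (β 0))
    (hrec : ∀ n : ℕ, 1 ≤ n →
      p (n + 1) = (Polynomial.X - Polynomial.C (β n)) * p n - Polynomial.C (α n) * p (n - 1))
    (hα : ∀ n : ℕ, 1 ≤ n → α n ≠ 0)
    (d : ℕ → ℕ → ℕ → ℂ)
    (hd : ∀ n m : ℕ, p n * p m =
        ∑ k ∈ Finset.range (n + m + 1), Polynomial.C (d n m k) * p k)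
    (hd0 : ∀ n m k : ℕ, n + m < k → d n m k = 0) :
    ∀ n m : ℕ, d n m 0 = if n = m then ∏ i ∈ Finset.Icc 1 n, α i else 0 := by
  have hmon := pmonic β α p hp0 hp1 hrec
  have hLp := Lfun_p β α p hp0 hp1 hrec
  -- key claim on moments
  have hM : ∀ j n : ℕ, (j < n → Lfun p ((X : Polynomial ℂ)^j * p n) = 0) ∧
      (j = n → Lfun p ((X : Polynomial ℂ)^j * p n) = ∏ i ∈ Finset.Icc 1 n, α i) := by
    intro j
    induction j with
    | zero =>
      intro n
      constructor
      · intro hn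
        rw [pow_zero, one_mul, hLp n, if_neg (by omega)]
      · rintro rfl
        rw [pow_zero, one_mul, hLp 0]
        simp
    | succ j ih =>
      intro n
      match n with
      | 0 => exact ⟨by omega, by omega⟩
      | (m+1) =>
        have hrw := hrec (m+1) (by omega)
        simp only [Nat.add_sub_cancel] at hrw
        have key : (X : Polynomial ℂ)^(j+1) * p (m+1) =
            X^j * p (m+2) + C (β (m+1)) * (X^j * p (m+1)) + C (α (m+1)) * (X^j * p m) := by
          have : p (m+2) = (X - C (β (m+1))) * p (m+1) - C (α (m+1)) * p m := hrw
          rw [this]; ring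
        have hval : Lfun p ((X : Polynomial ℂ)^(j+1) * p (m+1)) =
            Lfun p (X^j * p (m+2)) + β (m+1) * Lfun p (X^j * p (m+1))
              + α (m+1) * Lfun p (X^j * p m) := by
          rw [key, Lfun_add, Lfun_add, Lfun_C_mul, Lfun_C_mul]
        constructor
        · intro hlt
          rw [hval, (ih (m+2)).1 (by omega), (ih (m+1)).1 (by omega), (ih m).1 (by omega)]
          ring
        · intro heq
          have hjm : j = m := by omega
          rw [hval, (ih (m+2)).1 (by omega), (ih (m+1)).1 (by omega), (ih m).2 hjm]
          rw [Finset.prod_Icc_succ_top (by omega : 1 ≤ m+1)]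
          ring
  -- Lfun of products
  have hK : ∀ n m : ℕ, n ≤ m → Lfun p (p n * p m) =
      if n = m then ∏ i ∈ Finset.Icc 1 n, α i else 0 := by
    intro n m hnm
    have hexp : p n * p m = ∑ j ∈ Finset.range (n+1),
        C ((p n).coeff j) * ((X : Polynomial ℂ)^j * p m) := by
      have hpn : p n = ∑ j ∈ Finset.range (n+1), C ((p n).coeff j) * X^j := by
        have h := Polynomial.as_sum_range_C_mul_X_pow (p n)
        rwa [(hmon n).2] at h
      conv_lhs => rw [hpn]
      rw [Finset.sum_mul]
      exact Finset.sum_congr rfl (fun j _ => by ring)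
    rw [hexp, Lfun_sum]
    rcases eq_or_lt_of_le hnm with rfl | hlt
    · rw [Finset.sum_range_succ]
      have hz : ∀ j ∈ Finset.range n, Lfun p (C ((p n).coeff j) * ((X:Polynomial ℂ)^j * p n)) = 0 := by
        intro j hj
        rw [Lfun_C_mul, (hM j n).1 (Finset.mem_range.mp hj), mul_zero]
      rw [Finset.sum_eq_zero hz, Lfun_C_mul, (hM n n).2 rfl]
      have hc : (p n).coeff n = 1 := by
        have := (hmon n).1.coeff_natDegree
        rwa [(hmon n).2] at this
      simp [hc]
    · have hz : ∀ j ∈ Finset.range (n+1),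
          Lfun p (C ((p n).coeff j) * ((X:Polynomial ℂ)^j * p m)) = 0 := by
        intro j hj
        rw [Lfun_C_mul, (hM j m).1 (by have := Finset.mem_range.mp hj; omega), mul_zero]
      rw [Finset.sum_eq_zero hz, if_neg (by omega)]
  -- conclude
  intro n m
  have hdL : Lfun p (p n * p m) = d n m 0 := by
    rw [hd n m, Lfun_sum]
    have : ∀ k ∈ Finset.range (n+m+1),
        Lfun p (C (d n m k) * p k) = if k = 0 then d n m k else 0 := by
      intro k hk
      rw [Lfun_C_mul, hLp k]
      split <;> simp
    rw [Finset.sum_congr rfl this, Finset.sum_ite_eq' (Finset.range (n+m+1)) 0 (fun k => d n m k)]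
    simp
  rcases le_or_gt n m with h | h
  · rw [← hdL, hK n m h]
  · rw [← hdL, mul_comm, hK m n (le_of_lt h), if_neg (by omega), if_neg (by omega)]
end

section
/- Let {p_n} satisfy the three-term recurrence p_{n+1} = (t − β_n)p_n − α_n p_{n−1} with α_n ≠ 0, and let d(n,m,k) be defined by p_n p_m = ∑_k d(n,m,k) p_k. Then d(n,m,k) = 0 whenever k < |n − m|, so that p_n(t) p_m(t) = ∑_{k=|n−m|}^{n+m} d(n,m,k) p_k(t). -/
open scoped BigOperators

open Polynomial Finset


-- monic + degree
private lemma aux_monic (β α : ℕ → ℂ) (p : ℕ → Polynomial ℂ)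
    (hp0 : p 0 = 1) (hp1 : p 1 = X - C (β 0))
    (hrec : ∀ n : ℕ, 1 ≤ n → p (n + 1) = (X - C (β n)) * p n - C (α n) * p (n - 1)) :
    ∀ n, (p n).Monic ∧ (p n).natDegree = n := by
  intro n
  induction n using Nat.strong_induction_on with
  | _ n ih =>
    match n with
    | 0 => exact ⟨hp0 ▸ monic_one, hp0 ▸ natDegree_one⟩
    | 1 => exact ⟨hp1 ▸ monic_X_sub_C _, hp1 ▸ natDegree_X_sub_C _⟩
    | (k+2) =>
      obtain ⟨hm1, he1⟩ := ih (k+1) (by omega)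
      obtain ⟨hm0, he0⟩ := ih k (by omega)
      have hrec' := hrec (k+1) (by omega)
      simp only [Nat.add_sub_cancel] at hrec'
      have hmul : ((X - C (β (k+1))) * p (k+1)).Monic := (monic_X_sub_C _).mul hm1
      have hdeg : ((X - C (β (k+1))) * p (k+1)).natDegree = k + 2 := by
        rw [(monic_X_sub_C _).natDegree_mul hm1, natDegree_X_sub_C, he1]; omega
      have hlt : (C (α (k+1)) * p k).natDegree < ((X - C (β (k+1))) * p (k+1)).natDegree := by
        rw [hdeg]
        exact lt_of_le_of_lt (natDegree_C_mul_le _ _) (by omega)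
      constructor
      · rw [hrec']
        exact hmul.sub_of_left (degree_lt_degree hlt)
      · rw [hrec', natDegree_sub_eq_left_of_natDegree_lt hlt, hdeg]

private lemma aux_zero (p : ℕ → Polynomial ℂ)
    (hmd : ∀ n, (p n).Monic ∧ (p n).natDegree = n) :
    ∀ N (c : ℕ → ℂ), (∑ k ∈ range N, C (c k) * p k) = 0 → ∀ k < N, c k = 0 := by
  intro N
  induction N with
  | zero => intro c _ k hk; omega
  | succ N ih =>
    intro c hc k hk
    have hcN : c N = 0 := by
      have h0 : (∑ j ∈ range N, C (c j) * p j).coeff N + (C (c N) * p N).coeff N = 0 := by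
        rw [← Polynomial.coeff_add, ← Finset.sum_range_succ, hc, Polynomial.coeff_zero]
      rw [Polynomial.finset_sum_coeff] at h0
      have hz : ∀ j ∈ range N, (C (c j) * p j).coeff N = 0 := by
        intro j hj
        apply coeff_eq_zero_of_natDegree_lt
        exact lt_of_le_of_lt (natDegree_C_mul_le _ _) (by rw [(hmd j).2]; exact mem_range.mp hj)
      rw [Finset.sum_eq_zero hz, zero_add, Polynomial.coeff_C_mul] at h0
      have : (p N).coeff N = 1 := by
        have := (hmd N).1
        rw [Polynomial.Monic, leadingCoeff, (hmd N).2] at this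
        exact this
      rw [this, mul_one] at h0
      exact h0
    rcases Nat.lt_or_ge k N with h | h
    · apply ih c _ k h
      rw [Finset.sum_range_succ, hcN] at hc
      simpa using hc
    · have : k = N := by omega
      rw [this]; exact hcN

private lemma aux_eq (p : ℕ → Polynomial ℂ)
    (hmd : ∀ n, (p n).Monic ∧ (p n).natDegree = n) :
    ∀ N (a b : ℕ → ℂ),
      (∑ k ∈ range N, C (a k) * p k) = (∑ k ∈ range N, C (b k) * p k) →
      ∀ k < N, a k = b k := by
  intro N a b hab k hk
  have h := aux_zero p hmd N (fun k => a k - b k) (by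
    simp only [map_sub, sub_mul, Finset.sum_sub_distrib, hab, sub_self]) k hk
  exact sub_eq_zero.mp h

noncomputable def Sspan (p : ℕ → Polynomial ℂ) (K : ℕ) : Submodule ℂ (Polynomial ℂ) :=
  Submodule.span ℂ (Set.range fun j => p (K + j))

private lemma Sspan_mono (p : ℕ → Polynomial ℂ) {K L : ℕ} (h : K ≤ L) :
    Sspan p L ≤ Sspan p K := by
  apply Submodule.span_le.2
  rintro _ ⟨j, rfl⟩
  exact Submodule.subset_span ⟨L - K + j, congrArg p (by omega)⟩

private lemma mem_Sspan (p : ℕ → Polynomial ℂ) {K k : ℕ} (h : K ≤ k) : p k ∈ Sspan p K :=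
  Submodule.subset_span ⟨k - K, congrArg p (by omega)⟩

private lemma Sspan_mulX (β α : ℕ → ℂ) (p : ℕ → Polynomial ℂ)
    (hp0 : p 0 = 1) (hp1 : p 1 = X - C (β 0))
    (hrec : ∀ n : ℕ, 1 ≤ n → p (n + 1) = (X - C (β n)) * p n - C (α n) * p (n - 1)) :
    ∀ K q, q ∈ Sspan p K → X * q ∈ Sspan p (K - 1) := by
  have gen : ∀ k : ℕ, X * p k ∈ Sspan p (k - 1) := by
    intro k
    match k with
    | 0 =>
      have hX : X * p 0 = p 1 + (β 0) • p 0 := by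
        rw [Polynomial.smul_eq_C_mul, hp0, hp1]; ring
      rw [hX]
      exact add_mem (mem_Sspan p (by omega)) (Submodule.smul_mem _ _ (mem_Sspan p (by omega)))
    | (k+1) =>
      have hrec' := hrec (k+1) (by omega)
      simp only [Nat.add_sub_cancel] at hrec'
      have hX : X * p (k+1) = p (k+2) + (β (k+1)) • p (k+1) + (α (k+1)) • p k := by
        simp only [Polynomial.smul_eq_C_mul]
        rw [hrec']; ring
      rw [hX]
      exact add_mem (add_mem (mem_Sspan p (by omega))
        (Submodule.smul_mem _ _ (mem_Sspan p (by omega))))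
        (Submodule.smul_mem _ _ (mem_Sspan p (by omega)))
  intro K q hq
  induction hq using Submodule.span_induction with
  | mem x hx =>
    obtain ⟨j, rfl⟩ := hx
    exact Sspan_mono p (by omega) (gen (K + j))
  | zero => simp
  | add x y _ _ hx hy => rw [mul_add]; exact add_mem hx hy
  | smul a x _ hx => rw [mul_smul_comm]; exact Submodule.smul_mem _ _ hx

private lemma prodMemAux (β α : ℕ → ℂ) (p : ℕ → Polynomial ℂ)
    (hp0 : p 0 = 1) (hp1 : p 1 = X - C (β 0))
    (hrec : ∀ n : ℕ, 1 ≤ n → p (n + 1) = (X - C (β n)) * p n - C (α n) * p (n - 1)) :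
    ∀ m n : ℕ, p n * p m ∈ Sspan p (n - m) := by
  intro m
  induction m using Nat.strong_induction_on with
  | _ m ih =>
    intro n
    match m with
    | 0 => rw [hp0, mul_one]; simpa using mem_Sspan p (le_of_eq (Nat.sub_zero n).symm)
    | 1 =>
      have hX : p n * p 1 = X * p n - (β 0) • p n := by
        rw [hp1, Polynomial.smul_eq_C_mul]; ring
      rw [hX]
      refine sub_mem (Sspan_mulX β α p hp0 hp1 hrec n (p n) (mem_Sspan p le_rfl)) ?_
      exact Sspan_mono p (by omega) (Submodule.smul_mem _ _ (mem_Sspan p le_rfl))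
    | (k+2) =>
      have hrec' := hrec (k+1) (by omega)
      simp only [Nat.add_sub_cancel] at hrec'
      have hX : p n * p (k+2) = X * (p n * p (k+1)) - (β (k+1)) • (p n * p (k+1))
          - (α (k+1)) • (p n * p k) := by
        simp only [Polynomial.smul_eq_C_mul]
        rw [hrec']; ring
      rw [hX]
      have h1 : X * (p n * p (k+1)) ∈ Sspan p (n - (k+2)) := by
        have := Sspan_mulX β α p hp0 hp1 hrec (n - (k+1)) _ (ih (k+1) (by omega) n)
        have e : n - (k+1) - 1 = n - (k+2) := by omega
        rwa [e] at this
      refine sub_mem (sub_mem h1 ?_) ?_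
      · exact Sspan_mono p (by omega) (Submodule.smul_mem _ _ (ih (k+1) (by omega) n))
      · exact Sspan_mono p (by omega) (Submodule.smul_mem _ _ (ih k (by omega) n))

private lemma extractAux (p : ℕ → Polynomial ℂ)
    (hmd : ∀ n, (p n).Monic ∧ (p n).natDegree = n)
    (d : ℕ → ℕ → ℕ → ℂ)
    (hd : ∀ n m : ℕ, p n * p m = ∑ k ∈ Finset.range (n + m + 1), C (d n m k) * p k)
    (hd0 : ∀ n m k : ℕ, n + m < k → d n m k = 0) :
    ∀ n m K : ℕ, p n * p m ∈ Sspan p K → ∀ k < K, d n m k = 0 := by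
  intro n m K hmem k hk
  obtain ⟨l, hl⟩ := Finsupp.mem_span_range_iff_exists_finsupp.mp hmem
  set N : ℕ := n + m + 1 + K + (l.support.sup id) + 1 with hN
  set c : ℕ → ℂ := fun k => if K ≤ k then l (k - K) else 0 with hc
  have hsub : l.support ⊆ Finset.range (N - K) := by
    intro j hj
    have : j ≤ l.support.sup id := Finset.le_sup (f := id) hj
    simp only [Finset.mem_range]; omega
  have hB : (∑ k ∈ Finset.range N, C (c k) * p k) = p n * p m := by
    rw [← hl]
    have h1 : (∑ k ∈ Finset.range N, C (c k) * p k)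
        = ∑ k ∈ Finset.Ico K N, C (c k) * p k := by
      refine (Finset.sum_subset ?_ ?_).symm
      · intro x hx; simp only [Finset.mem_Ico] at hx; exact Finset.mem_range.mpr hx.2
      · intro x hx hnx
        simp only [Finset.mem_range] at hx
        simp only [Finset.mem_Ico, not_and, not_lt] at hnx
        have : ¬ K ≤ x := fun h => by omega
        simp [hc, this]
    rw [h1, Finset.sum_Ico_eq_sum_range]
    rw [Finsupp.sum_of_support_subset l hsub (fun j a => a • p (K + j)) (by simp)]
    apply Finset.sum_congr rfl
    intro j _
    simp [hc, Polynomial.smul_eq_C_mul, Nat.add_sub_cancel_left]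
  have hA : (∑ k ∈ Finset.range N, C (d n m k) * p k) = p n * p m := by
    rw [hd n m]
    refine (Finset.sum_subset ?_ ?_).symm
    · intro x hx; simp only [Finset.mem_range] at *; omega
    · intro x hx hnx
      simp only [Finset.mem_range] at hx hnx
      rw [hd0 n m x (by omega)]; simp
  have := aux_eq p hmd N (d n m) c (hA.trans hB.symm) k (by omega)
  rw [this]
  simp [hc, Nat.not_le.mpr hk]


theorem stmt10 (β : ℕ → ℂ) (α : ℕ → ℂ) (p : ℕ → Polynomial ℂ)
    (hp0 : p 0 = 1) (hp1 : p 1 = Polynomial.X - Polynomial.C (β 0))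
    (hrec : ∀ n : ℕ, 1 ≤ n →
      p (n + 1) = (Polynomial.X - Polynomial.C (β n)) * p n - Polynomial.C (α n) * p (n - 1))
    (hα : ∀ n : ℕ, 1 ≤ n → α n ≠ 0)
    (d : ℕ → ℕ → ℕ → ℂ)
    (hd : ∀ n m : ℕ, p n * p m =
        ∑ k ∈ Finset.range (n + m + 1), Polynomial.C (d n m k) * p k)
    (hd0 : ∀ n m k : ℕ, n + m < k → d n m k = 0) :
    (∀ n m k : ℕ, (k : ℤ) < |(n : ℤ) - (m : ℤ)| → d n m k = 0) ∧
    (∀ n m : ℕ, p n * p m =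
      ∑ k ∈ Finset.Icc ((n : ℤ) - (m : ℤ)).natAbs (n + m),
        Polynomial.C (d n m k) * p k) := by
  have hmd := aux_monic β α p hp0 hp1 hrec
  have hsym : ∀ n m k : ℕ, d n m k = d m n k := by
    intro n m k
    rcases Nat.lt_or_ge k (n + m + 1) with h | h
    · have h2 : p m * p n = ∑ j ∈ Finset.range (n + m + 1), C (d m n j) * p j := by
        rw [hd m n]
        apply Finset.sum_congr (by rw [Nat.add_comm m n]) (fun _ _ => rfl)
      exact aux_eq p hmd (n + m + 1) (d n m) (d m n)
        ((hd n m).symm.trans ((mul_comm (p n) (p m)).trans h2)) k h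
    · rw [hd0 n m k (by omega), hd0 m n k (by omega)]
  have key : ∀ n m k : ℕ, k + m < n → d n m k = 0 := by
    intro n m k hk
    exact extractAux p hmd d hd hd0 n m (n - m)
      (prodMemAux β α p hp0 hp1 hrec m n) k (by omega)
  have part1 : ∀ n m k : ℕ, (k : ℤ) < |(n : ℤ) - (m : ℤ)| → d n m k = 0 := by
    intro n m k hk
    rcases Nat.le_total m n with h | h
    · apply key n m k
      rw [abs_of_nonneg (by push_cast; omega)] at hk
      omega
    · rw [hsym n m k]
      apply key m n k
      rw [abs_of_nonpos (by push_cast; omega)] at hk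
      omega
  refine ⟨part1, ?_⟩
  intro n m
  rw [hd n m]
  refine (Finset.sum_subset ?_ ?_).symm
  · intro x hx
    simp only [Finset.mem_Icc] at hx
    simp only [Finset.mem_range]; omega
  · intro x hx hnx
    simp only [Finset.mem_range] at hx
    simp only [Finset.mem_Icc, not_and, not_le] at hnx
    have hxlt : x < ((n : ℤ) - (m : ℤ)).natAbs := by
      by_contra hcon
      exact absurd (hnx (by omega)) (by omega)
    rw [part1 n m x (by rw [Int.abs_eq_natAbs]; exact_mod_cast hxlt)]
    simp
end

section
/- Let a, b ∈ ℂ with a ≠ 0, and let {p_n} be the monic Chebyshev-type polynomial sequence defined by p_0 = 1, p_1 = t − b, p_{n+1} = (t − b)p_n − a p_{n−1} for n ≥ 1. Let H = a X̂ + b I + X (where X is the shift with X_{j,j+1}=1 and X̂ its transpose). Then for all n ≥ 0: p_n(H) = ∑_{k=0}^{n} a^k X̂^k X^{n−k}. In particular p_n(H) does not depend on b. -/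
open scoped BigOperators

lemma matPow_succ (A : ℕ → ℕ → ℂ) (n i j : ℕ) :
    matPow A (n+1) i j = ∑' l, matPow A n i l * A l j := rfl

lemma matPow_X (m i j : ℕ) : matPow Xmat m i j = if j = i + m then 1 else 0 := by
  induction m generalizing j with
  | zero => simp [matPow, eq_comm]
  | succ m ih =>
    rw [matPow_succ, tsum_eq_single (i + m) (fun l hl => by rw [ih]; simp [hl])]
    rw [ih, if_pos rfl, one_mul]
    simp [Xmat, Nat.add_assoc]

lemma matPow_Xhat (m i j : ℕ) : matPow XhatMat m i j = if i = j + m then 1 else 0 := by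
  induction m generalizing j with
  | zero => simp [matPow]
  | succ m ih =>
    rw [matPow_succ, tsum_eq_single (j + 1) ?_]
    · rw [XhatMat, if_pos rfl, mul_one, ih,
        if_congr (show (i = j + 1 + m) ↔ (i = j + (m+1)) by omega) rfl rfl]
    · intro l hl
      have : XhatMat l j = 0 := by simp [XhatMat, hl]
      rw [this, mul_zero]

lemma mulXX (k m i j : ℕ) :
    matMul (matPow XhatMat k) (matPow Xmat m) i j
      = if k ≤ i ∧ j + k = i + m then 1 else 0 := by
  unfold matMul
  by_cases hk : k ≤ i
  · rw [tsum_eq_single (i - k) ?_]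
    · rw [matPow_Xhat, matPow_X, if_pos (show i = i - k + k by omega), one_mul,
        if_congr (show (j = i - k + m) ↔ (k ≤ i ∧ j + k = i + m) by omega) rfl rfl]
    · intro l hl
      rw [matPow_Xhat, if_neg (by omega), zero_mul]
  · rw [if_neg (by omega)]
    have : ∀ l : ℕ, matPow XhatMat k i l * matPow Xmat m l j = 0 := by
      intro l; rw [matPow_Xhat, if_neg (by omega), zero_mul]
    simp only [this, tsum_zero]

noncomputable def Hd (a b : ℂ) : ℕ → ℕ → ℂ :=
  fun i k => a * XhatMat i k + b * Imat i k + Xmat i k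

lemma Hd_ne (a b : ℂ) (l j : ℕ) (h1 : l ≠ j + 1) (h2 : l ≠ j) (h3 : j ≠ l + 1) :
    Hd a b l j = 0 := by
  simp only [Hd, XhatMat, Imat, Xmat, if_neg h1, if_neg h2, if_neg h3]
  ring

lemma summable_col (a b : ℂ) (g : ℕ → ℂ) (j : ℕ) :
    Summable (fun l => g l * Hd a b l j) := by
  apply summable_of_ne_finset_zero (s := Finset.range (j + 2))
  intro l hl
  rw [Hd_ne a b l j (by simp at hl; omega) (by simp at hl; omega) (by simp at hl; omega),
    mul_zero]

lemma mul_Hd (a b : ℂ) (M : ℕ → ℕ → ℂ) (i j : ℕ) :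
    matMul M (Hd a b) i j
      = (if 1 ≤ j then M i (j-1) else 0) + b * M i j + a * M i (j+1) := by
  unfold matMul
  rcases j with _ | j'
  · rw [tsum_eq_sum (s := {0, 1}) ?_]
    · have e1 : Hd a b 0 0 = b := by
        simp [Hd, XhatMat, Imat, Xmat]
      have e2 : Hd a b 1 0 = a := by
        simp [Hd, XhatMat, Imat, Xmat]
      rw [Finset.sum_insert (by decide), Finset.sum_singleton, e1, e2]
      rw [if_neg (by omega)]
      ring
    · intro l hl
      simp only [Finset.mem_insert, Finset.mem_singleton] at hl
      push_neg at hl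
      rw [Hd_ne a b l 0 (by omega) (by omega) (by omega), mul_zero]
  · rw [tsum_eq_sum (s := {j', j'+1, j'+2}) ?_]
    · have e1 : Hd a b j' (j'+1) = 1 := by
        simp [Hd, XhatMat, Imat, Xmat]
        exact fun h => absurd h (by omega)
      have e2 : Hd a b (j'+1) (j'+1) = b := by
        simp [Hd, XhatMat, Imat, Xmat]
      have e3 : Hd a b (j'+2) (j'+1) = a := by
        simp [Hd, XhatMat, Imat, Xmat]
      rw [Finset.sum_insert (by simp), Finset.sum_insert (by simp), Finset.sum_singleton,
        e1, e2, e3, if_pos (by omega), Nat.add_sub_cancel]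
      ring
    · intro l hl
      simp only [Finset.mem_insert, Finset.mem_singleton] at hl
      push_neg at hl
      rw [Hd_ne a b l (j'+1) (by omega) (by omega) (by omega), mul_zero]

noncomputable def Tm (a : ℂ) (n : ℕ) : ℕ → ℕ → ℂ :=
  fun i j => ∑ k ∈ Finset.range (n+1), a^k * (if k ≤ i ∧ j + 2*k = i + n then 1 else 0)

lemma key1 (a : ℂ) (n i j : ℕ) :
    a * Tm a (n+1) i (j+1) - a * Tm a n i j
      = a^(n+2) * (if n+2 ≤ i ∧ j + 2*(n+2) = i + (n+2) then 1 else 0) := by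
  have h1 : a * Tm a (n+1) i (j+1)
      = ∑ k ∈ Finset.range (n+2),
          a^(k+1) * (if k ≤ i ∧ j + 2*(k+1) = i + (n+2) then 1 else 0) := by
    rw [Tm, Finset.mul_sum]
    refine Finset.sum_congr rfl fun k hk => ?_
    rw [if_congr (show (k ≤ i ∧ (j+1) + 2*k = i + (n+1)) ↔ (k ≤ i ∧ j + 2*(k+1) = i + (n+2))
      by omega) rfl rfl]
    ring
  have h2 : a * Tm a n i j
      = ∑ k ∈ Finset.range (n+1),
          a^(k+1) * (if k ≤ i ∧ j + 2*(k+1) = i + (n+2) then 1 else 0) := by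
    rw [Tm, Finset.mul_sum]
    refine Finset.sum_congr rfl fun k hk => ?_
    rw [if_congr (show (k ≤ i ∧ j + 2*k = i + n) ↔ (k ≤ i ∧ j + 2*(k+1) = i + (n+2))
      by omega) rfl rfl]
    ring
  rw [h1, h2, Finset.sum_range_succ, add_sub_cancel_left,
    if_congr (show (n+1 ≤ i ∧ j + 2*(n+1+1) = i + (n+2)) ↔ (n+2 ≤ i ∧ j + 2*(n+2) = i + (n+2))
      by omega) rfl rfl]

lemma key2 (a : ℂ) (n i j : ℕ) :
    Tm a (n+1) i j
      = (if 1 ≤ j then Tm a n i (j-1) else 0)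
        + a^(n+1) * (if n+1 ≤ i ∧ j + 2*(n+1) = i + (n+1) then 1 else 0) := by
  have hmain : Tm a (n+1) i j
      = (∑ k ∈ Finset.range (n+1), a^k * (if k ≤ i ∧ j + 2*k = i + (n+1) then 1 else 0))
        + a^(n+1) * (if n+1 ≤ i ∧ j + 2*(n+1) = i + (n+1) then 1 else 0) := by
    simp only [Tm]
    rw [Finset.sum_range_succ]
  rw [hmain]
  congr 1
  rcases j with _ | j'
  · rw [if_neg (by omega)]
    refine Finset.sum_eq_zero fun k hk => ?_
    simp only [Finset.mem_range] at hk
    rw [if_neg (by omega), mul_zero]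
  · rw [if_pos (by omega)]
    simp only [Tm, Nat.add_sub_cancel]
    refine Finset.sum_congr rfl fun k hk => ?_
    congr 1
    exact if_congr (show (k ≤ i ∧ (j'+1) + 2*k = i + (n+1)) ↔ (k ≤ i ∧ j' + 2*k = i + n)
      by omega) rfl rfl

lemma key3 (a : ℂ) (n i j : ℕ) :
    (if 1 ≤ j then Tm a (n+1) i (j-1) else 0) + a * Tm a (n+1) i (j+1) - a * Tm a n i j
      = Tm a (n+2) i j := by
  have hk := key1 a n i j
  have h2 : Tm a (n+2) i j
      = (if 1 ≤ j then Tm a (n+1) i (j-1) else 0)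
        + a^(n+2) * (if n+2 ≤ i ∧ j + 2*(n+2) = i + (n+2) then 1 else 0) := key2 a (n+1) i j
  linear_combination hk - h2

lemma rhs_eq (a : ℂ) (n i j : ℕ) :
    ∑ k ∈ Finset.range (n+1), a^k * matMul (matPow XhatMat k) (matPow Xmat (n-k)) i j
      = Tm a n i j := by
  simp only [Tm]
  refine Finset.sum_congr rfl fun k hk => ?_
  simp only [Finset.mem_range] at hk
  rw [mulXX, if_congr (show (k ≤ i ∧ j + k = i + (n - k)) ↔ (k ≤ i ∧ j + 2*k = i + n)
    by omega) rfl rfl]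

lemma matPolyEval_eq_sum (w : Polynomial ℂ) (A : ℕ → ℕ → ℂ) (N : ℕ) (h : w.natDegree < N)
    (i j : ℕ) :
    matPolyEval w A i j = ∑ m ∈ Finset.range N, w.coeff m * matPow A m i j := by
  unfold matPolyEval
  refine Finset.sum_subset (Finset.range_subset_range.mpr h) fun m hm hm' => ?_
  simp only [Finset.mem_range] at hm hm'
  rw [Polynomial.coeff_eq_zero_of_natDegree_lt (by omega), zero_mul]

lemma evalRec (a b : ℂ) (q r s : Polynomial ℂ)
    (hs : s = (Polynomial.X - Polynomial.C b) * q - Polynomial.C a * r)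
    (N : ℕ) (hq : q.natDegree < N) (hr : r.natDegree < N + 1) (hsN : s.natDegree < N + 1)
    (i j : ℕ) :
    matPolyEval s (Hd a b) i j
      = matMul (matPolyEval q (Hd a b)) (Hd a b) i j
        - b * matPolyEval q (Hd a b) i j - a * matPolyEval r (Hd a b) i j := by
  have hcoeff : ∀ m, s.coeff m
      = (Polynomial.X * q).coeff m - b * q.coeff m - a * r.coeff m := by
    intro m
    rw [hs, sub_mul]
    simp only [Polynomial.coeff_sub, Polynomial.coeff_C_mul]
    try ring
  rw [matPolyEval_eq_sum s (Hd a b) (N+1) hsN i j]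
  simp only [hcoeff, sub_mul]
  rw [Finset.sum_sub_distrib, Finset.sum_sub_distrib]
  have h1 : ∑ m ∈ Finset.range (N+1), (Polynomial.X * q).coeff m * matPow (Hd a b) m i j
      = matMul (matPolyEval q (Hd a b)) (Hd a b) i j := by
    rw [Finset.sum_range_succ']
    have h0 : (Polynomial.X * q).coeff 0 = 0 := by
      rw [Polynomial.mul_coeff_zero, Polynomial.coeff_X_zero, zero_mul]
    rw [h0, zero_mul, add_zero]
    simp only [Polynomial.coeff_X_mul, matPow_succ]
    calc ∑ m ∈ Finset.range N, q.coeff m * ∑' l, matPow (Hd a b) m i l * Hd a b l j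
        = ∑ m ∈ Finset.range N, ∑' l, q.coeff m * (matPow (Hd a b) m i l * Hd a b l j) := by
          refine Finset.sum_congr rfl fun m _ => ?_
          rw [tsum_mul_left]
      _ = ∑' l, ∑ m ∈ Finset.range N, q.coeff m * (matPow (Hd a b) m i l * Hd a b l j) := by
          refine (Summable.tsum_finsetSum fun m _ => ?_).symm
          have := summable_col a b (fun l => q.coeff m * matPow (Hd a b) m i l) j
          simpa [mul_assoc] using this
      _ = ∑' l, matPolyEval q (Hd a b) i l * Hd a b l j := by
          refine tsum_congr fun l => ?_
          rw [matPolyEval_eq_sum q (Hd a b) N hq, Finset.sum_mul]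
          refine Finset.sum_congr rfl fun m _ => ?_
          ring
      _ = matMul (matPolyEval q (Hd a b)) (Hd a b) i j := rfl
  have hb : ∑ m ∈ Finset.range (N+1), b * q.coeff m * matPow (Hd a b) m i j
      = b * matPolyEval q (Hd a b) i j := by
    rw [matPolyEval_eq_sum q (Hd a b) (N+1) (by omega) i j, Finset.mul_sum]
    exact Finset.sum_congr rfl fun m _ => by ring
  have ha' : ∑ m ∈ Finset.range (N+1), a * r.coeff m * matPow (Hd a b) m i j
      = a * matPolyEval r (Hd a b) i j := by
    rw [matPolyEval_eq_sum r (Hd a b) (N+1) hr i j, Finset.mul_sum]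
    exact Finset.sum_congr rfl fun m _ => by ring
  rw [h1, hb, ha']

lemma evalZero (a b : ℂ) (i j : ℕ) : matPolyEval 1 (Hd a b) i j = Tm a 0 i j := by
  have h1 : matPolyEval 1 (Hd a b) i j = (1 : Polynomial ℂ).coeff 0 * matPow (Hd a b) 0 i j := by
    unfold matPolyEval
    rw [Polynomial.natDegree_one, Finset.sum_range_one]
  rw [h1, Polynomial.coeff_one_zero, one_mul]
  show (if i = j then (1:ℂ) else 0) = Tm a 0 i j
  simp only [Tm]
  rw [Finset.sum_range_one, pow_zero, one_mul,
    if_congr (show (i = j) ↔ (0 ≤ i ∧ j + 2*0 = i + 0) by omega) rfl rfl]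

lemma evalOne (a b : ℂ) (i j : ℕ) :
    matPolyEval (Polynomial.X - Polynomial.C b) (Hd a b) i j = Tm a 1 i j := by
  have h1 : matPow (Hd a b) 1 i j = Hd a b i j := by
    rw [matPow_succ, tsum_eq_single i ?_]
    · show (if i = i then (1:ℂ) else 0) * Hd a b i j = _
      rw [if_pos rfl, one_mul]
    · intro l hl
      show (if i = l then (1:ℂ) else 0) * Hd a b l j = 0
      rw [if_neg (fun h => hl h.symm), zero_mul]
  unfold matPolyEval
  rw [Polynomial.natDegree_X_sub_C, Finset.sum_range_succ, Finset.sum_range_one, h1]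
  have c0 : (Polynomial.X - Polynomial.C b).coeff 0 = -b := by simp
  have c1 : (Polynomial.X - Polynomial.C b).coeff 1 = 1 := by simp
  rw [c0, c1, one_mul]
  show -b * (if i = j then (1:ℂ) else 0) + Hd a b i j = Tm a 1 i j
  simp only [Hd, XhatMat, Imat, Xmat, Tm]
  rw [Finset.sum_range_succ, Finset.sum_range_one]
  split_ifs <;> (first | ring1 | (exfalso; omega))

theorem stmt11 (a b : ℂ) (ha : a ≠ 0) (p : ℕ → Polynomial ℂ)
    (hp0 : p 0 = 1) (hp1 : p 1 = Polynomial.X - Polynomial.C b)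
    (hrec : ∀ n : ℕ, 1 ≤ n →
      p (n + 1) = (Polynomial.X - Polynomial.C b) * p n - Polynomial.C a * p (n - 1)) :
    let H : ℕ → ℕ → ℂ := fun i k => a * XhatMat i k + b * Imat i k + Xmat i k
    ∀ n i j : ℕ,
      matPolyEval (p n) H i j =
        ∑ k ∈ Finset.range (n + 1),
          a ^ k * matMul (matPow XhatMat k) (matPow Xmat (n - k)) i j := by
  intro H
  have hdeg : ∀ m : ℕ, (p m).natDegree ≤ m := by
    intro m
    induction m using Nat.twoStepInduction with
    | zero => simp [hp0]
    | one => rw [hp1]; exact le_of_eq (Polynomial.natDegree_X_sub_C b)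
    | more n ih1 ih2 =>
      rw [hrec (n+1) (by omega)]
      refine le_trans (Polynomial.natDegree_sub_le _ _) (max_le ?_ ?_)
      · refine le_trans Polynomial.natDegree_mul_le ?_
        rw [Polynomial.natDegree_X_sub_C]
        omega
      · refine le_trans Polynomial.natDegree_mul_le ?_
        simp only [Polynomial.natDegree_C]
        have h : (n+1) - 1 = n := rfl
        rw [h]
        omega
  have main : ∀ n i j : ℕ, matPolyEval (p n) (Hd a b) i j = Tm a n i j := by
    intro n
    induction n using Nat.twoStepInduction with
    | zero => intro i j; rw [hp0]; exact evalZero a b i j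
    | one => intro i j; rw [hp1]; exact evalOne a b i j
    | more n ih1 ih2 =>
      intro i j
      have hrec' : p (n+2) = (Polynomial.X - Polynomial.C b) * p (n+1) - Polynomial.C a * p n := by
        have h := hrec (n+1) (by omega)
        simpa using h
      rw [evalRec a b (p (n+1)) (p n) (p (n+2)) hrec' (n+2)
        (by have := hdeg (n+1); omega) (by have := hdeg n; omega)
        (by have := hdeg (n+2); omega) i j]
      have hq : matPolyEval (p (n+1)) (Hd a b) = Tm a (n+1) :=
        funext fun i => funext fun j => ih2 i j
      rw [hq, ih1, mul_Hd]
      linear_combination key3 a n i j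
  intro n i j
  rw [rhs_eq a n i j]
  exact main n i j
end

section
/- Let a ∈ ℂ with a ≠ 0, and define the monic Charlier polynomials by p_0 = 1, p_1 = t − a, p_{n+1}(t) = (t − (n + a)) p_n(t) − a n p_{n−1}(t) for n ≥ 1. Let H = X + XD + (a−1)I + aD, where X is the shift matrix and D the matrix with D_{k+1,k} = k+1. Then for all n ≥ 0: p_n(H) = ∑_{k=0}^{n} (n choose k) a^k D^k (I + D)^{n−k} X^{n−k}. -/
open scoped BigOperators

/-- The differentiation matrix `D`, with `D_{k+1,k} = k+1`. -/
def Dmat : ℕ → ℕ → ℂ := fun i k => if i = k + 1 then (i : ℂ) else 0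

namespace Stmt16Aux

noncomputable section

/-- `M` vanishes more than `b` above the diagonal. -/
def Banded (b : ℕ) (M : ℕ → ℕ → ℂ) : Prop := ∀ ⦃i j : ℕ⦄, i + b < j → M i j = 0

theorem Banded.mono {b b' : ℕ} {M : ℕ → ℕ → ℂ} (h : Banded b M) (hb : b ≤ b') :
    Banded b' M := fun i j hij => h (by omega)

theorem matMul_eq_sum {b : ℕ} {A : ℕ → ℕ → ℂ} (hA : Banded b A) (C : ℕ → ℕ → ℂ)
    (i k N : ℕ) (hN : i + b < N) :
    matMul A C i k = ∑ j ∈ Finset.range N, A i j * C j k := by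
  refine tsum_eq_sum fun j hj => ?_
  rw [Finset.mem_range, not_lt] at hj
  rw [hA (by omega), zero_mul]

theorem Banded.matMul {b₁ b₂ : ℕ} {A C : ℕ → ℕ → ℂ} (hA : Banded b₁ A) (hC : Banded b₂ C) :
    Banded (b₁ + b₂) (matMul A C) := by
  intro i k hik
  rw [matMul_eq_sum hA C i k (i + b₁ + 1) (by omega)]
  refine Finset.sum_eq_zero fun j hj => ?_
  by_cases h : A i j = 0
  · rw [h, zero_mul]
  · have hj1 : j ≤ i + b₁ := by by_contra hc; exact h (hA (by omega))
    rw [hC (by omega), mul_zero]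

/-- The type of banded matrices. -/
def BM : Type := {M : ℕ → ℕ → ℂ // ∃ b, Banded b M}

namespace BM

instance : Zero BM := ⟨⟨fun _ _ => 0, 0, fun _ _ _ => rfl⟩⟩
instance : One BM := ⟨⟨Imat, 0, fun i j h => by
  simp only [Imat, ite_eq_right_iff]; intro he; omega⟩⟩
instance : Add BM :=
  ⟨fun A B => ⟨fun i k => A.1 i k + B.1 i k, by
    obtain ⟨b₁, h₁⟩ := A.2; obtain ⟨b₂, h₂⟩ := B.2
    exact ⟨max b₁ b₂, fun i j hij => by
      dsimp only; rw [h₁ (by omega), h₂ (by omega), add_zero]⟩⟩⟩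
instance : Neg BM :=
  ⟨fun A => ⟨fun i k => -A.1 i k, by
    obtain ⟨b, h⟩ := A.2
    exact ⟨b, fun i j hij => by dsimp only; rw [h hij, neg_zero]⟩⟩⟩
instance : Sub BM :=
  ⟨fun A B => ⟨fun i k => A.1 i k - B.1 i k, by
    obtain ⟨b₁, h₁⟩ := A.2; obtain ⟨b₂, h₂⟩ := B.2
    exact ⟨max b₁ b₂, fun i j hij => by
      dsimp only; rw [h₁ (by omega), h₂ (by omega), sub_zero]⟩⟩⟩
instance : SMul ℂ BM :=
  ⟨fun c A => ⟨fun i k => c * A.1 i k, by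
    obtain ⟨b, h⟩ := A.2
    exact ⟨b, fun i j hij => by dsimp only; rw [h hij, mul_zero]⟩⟩⟩
instance : SMul ℕ BM :=
  ⟨fun c A => ⟨fun i k => c • A.1 i k, by
    obtain ⟨b, h⟩ := A.2
    exact ⟨b, fun i j hij => by dsimp only; rw [h hij, smul_zero]⟩⟩⟩
instance : SMul ℤ BM :=
  ⟨fun c A => ⟨fun i k => c • A.1 i k, by
    obtain ⟨b, h⟩ := A.2
    exact ⟨b, fun i j hij => by dsimp only; rw [h hij, smul_zero]⟩⟩⟩
instance : Mul BM :=
  ⟨fun A B => ⟨matMul A.1 B.1, by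
    obtain ⟨b₁, h₁⟩ := A.2; obtain ⟨b₂, h₂⟩ := B.2
    exact ⟨b₁ + b₂, h₁.matMul h₂⟩⟩⟩

theorem val_injective : Function.Injective (Subtype.val : BM → (ℕ → ℕ → ℂ)) :=
  Subtype.coe_injective

@[ext] theorem ext {A B : BM} (h : ∀ i k, A.1 i k = B.1 i k) : A = B :=
  val_injective (funext fun i => funext fun k => h i k)

theorem val_add (A B : BM) (i k : ℕ) : (A + B).1 i k = A.1 i k + B.1 i k := rfl
theorem val_mul (A B : BM) : (A * B).1 = matMul A.1 B.1 := rfl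
theorem val_smul (c : ℂ) (A : BM) (i k : ℕ) : (c • A).1 i k = c * A.1 i k := rfl
theorem val_one : (1 : BM).1 = Imat := rfl

instance : AddCommGroup BM :=
  Function.Injective.addCommGroup (Subtype.val : BM → (ℕ → ℕ → ℂ)) val_injective
    rfl (fun _ _ => rfl) (fun _ => rfl) (fun _ _ => rfl) (fun _ _ => rfl) (fun _ _ => rfl)

instance : Module ℂ BM :=
  Function.Injective.module ℂ
    { toFun := (Subtype.val : BM → (ℕ → ℕ → ℂ)), map_zero' := rfl, map_add' := fun _ _ => rfl }
    val_injective (fun _ _ => rfl)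

protected theorem mul_assoc (A B C : BM) : A * B * C = A * (B * C) := by
  obtain ⟨b₁, hA⟩ := A.2
  obtain ⟨b₂, hB⟩ := B.2
  refine ext fun i k => ?_
  show matMul (matMul A.1 B.1) C.1 i k = matMul A.1 (matMul B.1 C.1) i k
  rw [matMul_eq_sum (hA.matMul hB) C.1 i k (i + b₁ + b₂ + 1) (by omega),
      matMul_eq_sum hA (matMul B.1 C.1) i k (i + b₁ + b₂ + 1) (by omega)]
  calc ∑ j ∈ Finset.range (i + b₁ + b₂ + 1), matMul A.1 B.1 i j * C.1 j k
      = ∑ j ∈ Finset.range (i + b₁ + b₂ + 1), ∑ l ∈ Finset.range (i + b₁ + b₂ + 1),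
          A.1 i l * (B.1 l j * C.1 j k) := by
        refine Finset.sum_congr rfl fun j _ => ?_
        rw [matMul_eq_sum hA B.1 i j (i + b₁ + b₂ + 1) (by omega), Finset.sum_mul]
        exact Finset.sum_congr rfl fun l _ => mul_assoc _ _ _
    _ = ∑ l ∈ Finset.range (i + b₁ + b₂ + 1), ∑ j ∈ Finset.range (i + b₁ + b₂ + 1),
          A.1 i l * (B.1 l j * C.1 j k) := Finset.sum_comm
    _ = ∑ l ∈ Finset.range (i + b₁ + b₂ + 1), A.1 i l * matMul B.1 C.1 l k := by
        refine Finset.sum_congr rfl fun l _ => ?_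
        rw [← Finset.mul_sum]
        by_cases h : A.1 i l = 0
        · rw [h, zero_mul, zero_mul]
        · have hl : l ≤ i + b₁ := by by_contra hc; exact h (hA (by omega))
          rw [matMul_eq_sum hB C.1 l k (i + b₁ + b₂ + 1) (by omega)]

protected theorem one_mul (A : BM) : 1 * A = A := by
  refine ext fun i k => ?_
  show matMul Imat A.1 i k = A.1 i k
  have hI : Banded 0 Imat := fun i j h => by
    simp only [Imat, ite_eq_right_iff]; intro he; omega
  rw [matMul_eq_sum hI A.1 i k (i + 1) (by omega)]
  simp [Imat, ite_mul, Finset.sum_ite_eq]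

protected theorem mul_one (A : BM) : A * 1 = A := by
  refine ext fun i k => ?_
  show matMul A.1 Imat i k = A.1 i k
  have : ∀ j, j ≠ k → A.1 i j * Imat j k = 0 := by
    intro j hj; simp [Imat, hj]
  rw [matMul, tsum_eq_single k this]
  simp [Imat]

protected theorem zero_mul (A : BM) : 0 * A = 0 := by
  refine ext fun i k => ?_
  show matMul (fun _ _ => (0:ℂ)) A.1 i k = 0
  simp [matMul]

protected theorem mul_zero (A : BM) : A * 0 = 0 := by
  refine ext fun i k => ?_
  show matMul A.1 (fun _ _ => (0:ℂ)) i k = 0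
  simp [matMul]

protected theorem left_distrib (A B C : BM) : A * (B + C) = A * B + A * C := by
  obtain ⟨b, hA⟩ := A.2
  refine ext fun i k => ?_
  show matMul A.1 (B + C).1 i k = matMul A.1 B.1 i k + matMul A.1 C.1 i k
  rw [matMul_eq_sum hA (B + C).1 i k (i + b + 1) (by omega),
      matMul_eq_sum hA B.1 i k (i + b + 1) (by omega),
      matMul_eq_sum hA C.1 i k (i + b + 1) (by omega),
      ← Finset.sum_add_distrib]
  exact Finset.sum_congr rfl fun j _ => by rw [val_add, mul_add]

protected theorem right_distrib (A B C : BM) : (A + B) * C = A * C + B * C := by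
  obtain ⟨b₁, hA⟩ := A.2
  obtain ⟨b₂, hB⟩ := B.2
  have hAB : Banded (max b₁ b₂) (A + B).1 := fun i j hij => by
    rw [val_add, hA (by omega), hB (by omega), add_zero]
  refine ext fun i k => ?_
  show matMul (A + B).1 C.1 i k = matMul A.1 C.1 i k + matMul B.1 C.1 i k
  rw [matMul_eq_sum hAB C.1 i k (i + max b₁ b₂ + 1) (by omega),
      matMul_eq_sum (hA.mono (le_max_left b₁ b₂)) C.1 i k (i + max b₁ b₂ + 1) (by omega),
      matMul_eq_sum (hB.mono (le_max_right b₁ b₂)) C.1 i k (i + max b₁ b₂ + 1) (by omega),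
      ← Finset.sum_add_distrib]
  exact Finset.sum_congr rfl fun j _ => by rw [val_add, add_mul]

instance : Ring BM :=
  { (inferInstance : AddCommGroup BM) with
    mul_assoc := BM.mul_assoc
    one_mul := BM.one_mul
    mul_one := BM.mul_one
    zero_mul := BM.zero_mul
    mul_zero := BM.mul_zero
    left_distrib := BM.left_distrib
    right_distrib := BM.right_distrib }

instance : Algebra ℂ BM :=
  Algebra.ofModule
    (fun r x y => by
      refine ext fun i k => ?_
      show matMul (r • x).1 y.1 i k = r * matMul x.1 y.1 i k
      rw [matMul, matMul, ← tsum_mul_left]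
      exact tsum_congr fun j => by rw [val_smul, mul_assoc])
    (fun r x y => by
      refine ext fun i k => ?_
      show matMul x.1 (r • y).1 i k = r * matMul x.1 y.1 i k
      rw [matMul, matMul, ← tsum_mul_left]
      exact tsum_congr fun j => by rw [val_smul, mul_left_comm])

theorem val_pow (A : BM) : ∀ m : ℕ, (A ^ m).1 = matPow A.1 m
  | 0 => rfl
  | m + 1 => by
    rw [pow_succ, matPow]
    show matMul (A ^ m).1 A.1 = _
    rw [val_pow A m]

end BM

end

end Stmt16Aux
namespace Stmt16Aux

noncomputable section

namespace BM

def xB : BM := ⟨Xmat, 1, fun i j h => by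
  simp only [Xmat]; rw [if_neg (by omega)]⟩
def dB : BM := ⟨Dmat, 0, fun i j h => by
  simp only [Dmat]; rw [if_neg (by omega)]⟩
def aaB : BM := 1 + dB
def hBM (a : ℂ) : BM := xB + xB * dB + (a - 1) • (1 : BM) + a • dB

theorem xd : xB * dB = dB * xB + 1 := by
  refine ext fun i k => ?_
  show matMul Xmat Dmat i k = matMul Dmat Xmat i k + Imat i k
  have h1 : matMul Xmat Dmat i k = Dmat (i + 1) k := by
    rw [matMul, tsum_eq_single (i + 1) (fun j hj => by simp [Xmat, hj])]
    simp [Xmat]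
  have h2 : matMul Dmat Xmat i k = if i = k then (i : ℂ) else 0 := by
    cases i with
    | zero =>
      have hz : ∀ j : ℕ, Dmat 0 j * Xmat j k = 0 := fun j => by simp [Dmat]
      rw [matMul]
      simp only [hz, tsum_zero]
      split_ifs <;> simp
    | succ m =>
      rw [matMul, tsum_eq_single m (fun j hj => by
        have : ¬ (m + 1 = j + 1) := by omega
        simp [Dmat, this, Ne.symm hj])]
      simp only [Dmat, Xmat, ite_true]
      by_cases h : k = m + 1
      · subst h; simp
      · rw [if_neg h, mul_zero, if_neg (fun hh => h hh.symm)]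
  rw [h1, h2]
  simp only [Dmat, Imat]
  by_cases h : i = k
  · subst h; rw [if_pos rfl, if_pos rfl, if_pos rfl]; push_cast; ring
  · rw [if_neg (by omega), if_neg h, if_neg h, add_zero]
  
theorem xaa : xB * aaB = aaB * xB + 1 := by
  rw [aaB, mul_add, add_mul, mul_one, one_mul, xd]; abel

theorem h_alt (a : ℂ) : hBM a = aaB * xB + a • aaB := by
  rw [hBM, aaB, xd, add_mul, one_mul, smul_add, sub_smul, one_smul]; abel

theorem x_comm_pow {y : BM} (h : xB * y = y * xB + 1) :
    ∀ k : ℕ, xB * y ^ (k + 1) = y ^ (k + 1) * xB + ((k : ℂ) + 1) • y ^ k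
  | 0 => by simpa using h
  | k + 1 => by
    have ih := x_comm_pow h k
    calc xB * y ^ (k + 2) = xB * y ^ (k + 1) * y := by rw [mul_assoc, ← pow_succ]
      _ = (y ^ (k + 1) * xB + ((k : ℂ) + 1) • y ^ k) * y := by rw [ih]
      _ = y ^ (k + 1) * (xB * y) + ((k : ℂ) + 1) • y ^ (k + 1) := by
          rw [add_mul, smul_mul_assoc, mul_assoc, ← pow_succ]
      _ = y ^ (k + 2) * xB + y ^ (k + 1) + ((k : ℂ) + 1) • y ^ (k + 1) := by
          rw [h, mul_add, mul_one, ← mul_assoc, ← pow_succ]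
      _ = y ^ (k + 2) * xB + ((((k : ℕ) + 1 : ℕ) : ℂ) + 1) • y ^ (k + 1) := by
          have hc : ((((k : ℕ) + 1 : ℕ) : ℂ) + 1) = ((k : ℂ) + 1) + 1 := by push_cast; ring
          conv_rhs => rw [hc, add_smul, one_smul]
          rw [add_assoc, add_comm (y ^ (k + 1))]

theorem aa_mul (W : BM) : aaB * W = W + dB * W := by
  rw [aaB, add_mul, one_mul]

theorem d_pow_mul (k : ℕ) (Z : BM) : dB * (dB ^ k * Z) = dB ^ (k + 1) * Z := by
  rw [← mul_assoc, ← pow_succ']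

theorem comm_aa_d : Commute aaB dB := by
  show aaB * dB = dB * aaB
  rw [aaB, add_mul, mul_add, one_mul, mul_one]

theorem aa_d_pow (k : ℕ) (Z : BM) : aaB * (dB ^ k * Z) = dB ^ k * (aaB * Z) := by
  rw [← mul_assoc, ← mul_assoc, (comm_aa_d.pow_right k).eq]

theorem aa_dZ (k m j : ℕ) :
    aaB * (dB ^ k * (aaB ^ m * xB ^ j)) = dB ^ k * (aaB ^ (m + 1) * xB ^ j) := by
  rw [aa_d_pow, ← mul_assoc aaB, ← pow_succ']

theorem x_aa_pow : ∀ m : ℕ,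
    xB * (aaB ^ m * xB ^ m) = aaB ^ m * xB ^ (m + 1) + (m : ℂ) • (aaB ^ (m - 1) * xB ^ m)
  | 0 => by simp
  | m + 1 => by
    calc xB * (aaB ^ (m + 1) * xB ^ (m + 1))
        = (xB * aaB ^ (m + 1)) * xB ^ (m + 1) := by rw [mul_assoc]
      _ = (aaB ^ (m + 1) * xB + ((m : ℂ) + 1) • aaB ^ m) * xB ^ (m + 1) := by
          rw [x_comm_pow xaa m]
      _ = aaB ^ (m + 1) * (xB * xB ^ (m + 1)) + ((m : ℂ) + 1) • (aaB ^ m * xB ^ (m + 1)) := by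
          rw [add_mul, smul_mul_assoc, mul_assoc]
      _ = aaB ^ (m + 1) * xB ^ (m + 2) + (((m : ℕ) + 1 : ℕ) : ℂ) • (aaB ^ ((m + 1) - 1) * xB ^ (m + 1)) := by
          rw [← pow_succ']; push_cast; simp
  
theorem x_d_pow (k : ℕ) (Z : BM) :
    xB * (dB ^ k * Z) = dB ^ k * (xB * Z) + (k : ℂ) • (dB ^ (k - 1) * Z) := by
  cases k with
  | zero => simp
  | succ k =>
    rw [← mul_assoc, x_comm_pow xd k, add_mul, mul_assoc, smul_mul_assoc]
    push_cast
    simp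

theorem L5 (k m : ℕ) :
    (m : ℂ) • (aaB * (dB ^ k * (aaB ^ (m - 1) * xB ^ m))) =
      (m : ℂ) • (dB ^ k * (aaB ^ m * xB ^ m)) := by
  cases m with
  | zero => simp
  | succ m => rw [Nat.succ_sub_one, aa_dZ]

theorem L6 (k : ℕ) (Z : BM) :
    (k : ℂ) • (aaB * (dB ^ (k - 1) * Z)) =
      (k : ℂ) • (dB ^ (k - 1) * Z) + (k : ℂ) • (dB ^ k * Z) := by
  cases k with
  | zero => simp
  | succ k => rw [aa_mul, smul_add, Nat.succ_sub_one, d_pow_mul]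

theorem hterm (a : ℂ) (k m : ℕ) :
    hBM a * (dB ^ k * (aaB ^ m * xB ^ m)) =
      dB ^ k * (aaB ^ (m + 1) * xB ^ (m + 1))
      + a • (dB ^ (k + 1) * (aaB ^ m * xB ^ m))
      + ((k : ℂ) + (m : ℂ) + a) • (dB ^ k * (aaB ^ m * xB ^ m))
      + (k : ℂ) • (dB ^ (k - 1) * (aaB ^ m * xB ^ m)) := by
  rw [h_alt, add_mul, mul_assoc, smul_mul_assoc]
  rw [x_d_pow k (aaB ^ m * xB ^ m), mul_add aaB, mul_smul_comm (k : ℂ) aaB]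
  rw [x_aa_pow m, mul_add (dB ^ k), mul_smul_comm (m : ℂ) (dB ^ k), mul_add aaB,
      mul_smul_comm (m : ℂ) aaB]
  rw [aa_dZ k m (m + 1), L5 k m, L6 k (aaB ^ m * xB ^ m),
      aa_mul (dB ^ k * (aaB ^ m * xB ^ m)), d_pow_mul k, smul_add a]
  rw [add_smul, add_smul]
  abel

end BM

end

end Stmt16Aux
namespace Stmt16Aux

noncomputable section

namespace BM

open Finset

def E (n k : ℕ) : BM := dB ^ k * (aaB ^ (n - k) * xB ^ (n - k))

def S (a : ℂ) (n : ℕ) : BM :=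
  ∑ k ∈ Finset.range (n + 1), ((n.choose k : ℂ) * a ^ k) • E n k

theorem hE (a : ℂ) {n k : ℕ} (hk : k ≤ n) :
    hBM a * E n k = E (n + 1) k + a • E (n + 1) (k + 1)
      + ((n : ℂ) + a) • E n k + (k : ℂ) • E (n - 1) (k - 1) := by
  obtain ⟨m, rfl⟩ : ∃ m, n = k + m := ⟨n - k, by omega⟩
  simp only [E]
  rw [show k + m - k = m from by omega, show k + m + 1 - k = m + 1 from by omega,
      show k + m + 1 - (k + 1) = m from by omega]
  cases k with
  | zero =>
    have h := hterm a 0 m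
    rw [show ((0 : ℕ) : ℂ) + (m : ℂ) + a = (((0 + m : ℕ) : ℂ) + a) from by push_cast; ring] at h
    simpa using h
  | succ k =>
    have h := hterm a (k + 1) m
    rw [show (((k + 1 : ℕ)) : ℂ) + (m : ℂ) + a = (((k + 1 + m : ℕ) : ℂ) + a) from by
          push_cast; ring] at h
    rw [show k + 1 - 1 = k from rfl, show k + 1 + m - 1 - k = m from by omega]
    rw [show k + 1 - 1 = k from rfl] at h
    exact h

theorem hkey (a : ℂ) (n : ℕ) :
    hBM a * S a n = S a (n + 1) + ((n : ℂ) + a) • S a n + (a * n) • S a (n - 1) := by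
  rw [S, Finset.mul_sum]
  have hstep : ∑ k ∈ Finset.range (n + 1), hBM a * (((n.choose k : ℂ) * a ^ k) • E n k)
      = ∑ k ∈ Finset.range (n + 1), ((n.choose k : ℂ) * a ^ k) •
          (E (n + 1) k + a • E (n + 1) (k + 1) + ((n : ℂ) + a) • E n k
            + (k : ℂ) • E (n - 1) (k - 1)) :=
    Finset.sum_congr rfl fun k hk => by
      rw [mul_smul_comm, hE a (Finset.mem_range_succ_iff.mp hk)]
  rw [hstep]
  simp only [smul_add]
  rw [Finset.sum_add_distrib, Finset.sum_add_distrib, Finset.sum_add_distrib]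
  have hA3 : ∑ k ∈ Finset.range (n + 1), ((n.choose k : ℂ) * a ^ k) • (((n : ℂ) + a) • E n k)
      = ((n : ℂ) + a) • S a n := by
    rw [S, Finset.smul_sum]
    exact Finset.sum_congr rfl fun k _ => smul_comm _ _ _
  have hA12 : S a (n + 1) =
      (∑ k ∈ Finset.range (n + 1), ((n.choose k : ℂ) * a ^ k) • E (n + 1) k)
      + ∑ k ∈ Finset.range (n + 1), ((n.choose k : ℂ) * a ^ k) • (a • E (n + 1) (k + 1)) := by
    calc S a (n + 1)
        = ∑ j ∈ Finset.range (n + 1), (((n + 1).choose (j + 1) : ℂ) * a ^ (j + 1)) • E (n + 1) (j + 1)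
          + (((n + 1).choose 0 : ℂ) * a ^ 0) • E (n + 1) 0 := by
            rw [S, Finset.sum_range_succ']
      _ = (∑ j ∈ Finset.range (n + 1), (((n.choose (j + 1) : ℂ) * a ^ (j + 1)) • E (n + 1) (j + 1)
            + ((n.choose j : ℂ) * a ^ j) • (a • E (n + 1) (j + 1))))
          + ((n.choose 0 : ℂ) * a ^ 0) • E (n + 1) 0 := by
            congr 1
            · refine Finset.sum_congr rfl fun j _ => ?_
              rw [smul_smul, ← add_smul]
              congr 1
              rw [Nat.choose_succ_succ]
              push_cast
              ring
            · norm_num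
      _ = (∑ j ∈ Finset.range (n + 1), ((n.choose (j + 1) : ℂ) * a ^ (j + 1)) • E (n + 1) (j + 1)
            + ((n.choose 0 : ℂ) * a ^ 0) • E (n + 1) 0)
          + ∑ j ∈ Finset.range (n + 1), ((n.choose j : ℂ) * a ^ j) • (a • E (n + 1) (j + 1)) := by
            rw [Finset.sum_add_distrib]; abel
      _ = (∑ k ∈ Finset.range (n + 2), ((n.choose k : ℂ) * a ^ k) • E (n + 1) k)
          + ∑ j ∈ Finset.range (n + 1), ((n.choose j : ℂ) * a ^ j) • (a • E (n + 1) (j + 1)) := by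
            rw [← Finset.sum_range_succ' (fun k => ((n.choose k : ℂ) * a ^ k) • E (n + 1) k) (n + 1)]
      _ = (∑ k ∈ Finset.range (n + 1), ((n.choose k : ℂ) * a ^ k) • E (n + 1) k)
          + ∑ j ∈ Finset.range (n + 1), ((n.choose j : ℂ) * a ^ j) • (a • E (n + 1) (j + 1)) := by
            rw [Finset.sum_range_succ]
            simp
  have hA4 : ∑ k ∈ Finset.range (n + 1), ((n.choose k : ℂ) * a ^ k) • ((k : ℂ) • E (n - 1) (k - 1))
      = (a * n) • S a (n - 1) := by
    cases n with
    | zero => simp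
    | succ n =>
      rw [Finset.sum_range_succ']
      simp only [Nat.cast_zero, zero_smul, smul_zero, add_zero, Nat.add_sub_cancel]
      rw [S, Finset.smul_sum]
      refine Finset.sum_congr rfl fun j hj => ?_
      rw [smul_smul, smul_smul]
      congr 1
      have hcc : ((n + 1).choose (j + 1) : ℕ) * (j + 1) = (n + 1) * n.choose j :=
        (Nat.add_one_mul_choose_eq n j).symm
      have hc2 : (((n + 1).choose (j + 1) : ℂ)) * ((j : ℂ) + 1) = ((n : ℂ) + 1) * (n.choose j : ℂ) := by
        exact_mod_cast congrArg (Nat.cast : ℕ → ℂ) hcc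
      push_cast
      linear_combination a ^ (j + 1) * hc2
  rw [hA3, hA4, hA12]
  simp only [S]

end BM

end

end Stmt16Aux
namespace Stmt16Aux

noncomputable section

namespace BM

def entryHom (i k : ℕ) : BM →+ ℂ where
  toFun A := A.1 i k
  map_zero' := rfl
  map_add' _ _ := rfl

theorem val_sum {α : Type*} {s : Finset α} (f : α → BM) (i k : ℕ) :
    (∑ x ∈ s, f x).1 i k = ∑ x ∈ s, (f x).1 i k :=
  map_sum (entryHom i k) f s

theorem S_zero (a : ℂ) : S a 0 = 1 := by
  rw [S]; simp [E]

theorem S_one (a : ℂ) : S a 1 = aaB * xB + a • dB := by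
  rw [S, Finset.sum_range_succ, Finset.sum_range_succ, Finset.sum_range_zero]
  simp [E]

theorem main (a : ℂ) (p : ℕ → Polynomial ℂ)
    (hp0 : p 0 = 1) (hp1 : p 1 = Polynomial.X - Polynomial.C a)
    (hrec : ∀ n : ℕ, 1 ≤ n →
      p (n + 1) = (Polynomial.X - Polynomial.C ((n : ℂ) + a)) * p n
        - Polynomial.C (a * n) * p (n - 1)) :
    ∀ n, Polynomial.aeval (hBM a) (p n) = S a n := by
  have key : ∀ n, Polynomial.aeval (hBM a) (p n) = S a n ∧
      Polynomial.aeval (hBM a) (p (n + 1)) = S a (n + 1) := by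
    intro n
    induction n with
    | zero =>
      refine ⟨by rw [hp0, map_one, S_zero], ?_⟩
      rw [hp1, map_sub, Polynomial.aeval_X, Polynomial.aeval_C, S_one, h_alt,
          Algebra.algebraMap_eq_smul_one, aaB, smul_add]
      abel
    | succ n ih =>
      refine ⟨ih.2, ?_⟩
      have hr := hrec (n + 1) (by omega)
      rw [Nat.add_sub_cancel] at hr
      rw [hr, map_sub, map_mul, map_mul, map_sub, Polynomial.aeval_X, Polynomial.aeval_C,
          Polynomial.aeval_C, ih.1, ih.2, sub_mul, ← Algebra.smul_def, ← Algebra.smul_def]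
      have hk := hkey a (n + 1)
      rw [Nat.add_sub_cancel] at hk
      rw [hk]
      abel
  exact fun n => (key n).1

end BM

end

end Stmt16Aux

open Stmt16Aux Stmt16Aux.BM in
theorem stmt16 (a : ℂ) (ha : a ≠ 0) (p : ℕ → Polynomial ℂ)
    (hp0 : p 0 = 1) (hp1 : p 1 = Polynomial.X - Polynomial.C a)
    (hrec : ∀ n : ℕ, 1 ≤ n →
      p (n + 1) = (Polynomial.X - Polynomial.C ((n : ℂ) + a)) * p n
        - Polynomial.C (a * n) * p (n - 1)) :
    let H : ℕ → ℕ → ℂ :=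
      fun i k => Xmat i k + matMul Xmat Dmat i k + (a - 1) * Imat i k + a * Dmat i k
    let IplusD : ℕ → ℕ → ℂ := fun i k => Imat i k + Dmat i k
    ∀ n i j : ℕ,
      matPolyEval (p n) H i j =
        ∑ k ∈ Finset.range (n + 1),
          (n.choose k : ℂ) * a ^ k *
            matMul (matPow Dmat k)
              (matMul (matPow IplusD (n - k)) (matPow Xmat (n - k))) i j := by
  intro H IplusD n i j
  have hHval : H = (hBM a).1 := rfl
  have hIval : IplusD = aaB.1 := rfl
  rw [hHval, hIval]
  have lhs_eq : matPolyEval (p n) (hBM a).1 i j = (S a n).1 i j := by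
    rw [← main a p hp0 hp1 hrec n, Polynomial.aeval_eq_sum_range, val_sum, matPolyEval]
    exact Finset.sum_congr rfl fun m _ => by rw [val_smul, val_pow]
  rw [lhs_eq, S, val_sum]
  refine Finset.sum_congr rfl fun k _ => ?_
  rw [val_smul, E, val_mul, val_mul, val_pow, val_pow, val_pow]
  rfl
end
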